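/- arXiv:0904.2282 — 4 statements merged into one kernel-verified Lean document; each statement's English description precedes it below -/
import Mathlib

section
/- For every positive integer k and every positive integer l, there exists an integer g such that every finite graph with tree-width at most k and odd-girth at least g admits a graph homomorphism to the cycle of length 2l+1. -/
open SimpleGraph

/-- `H` (a graph on `Fin n`) is a `k`-tree: there is a build order in which the first
`k+1` vertices form a clique and every later vertex has exactly `k` earlier neighbours,
which form a clique. -/
def IsKTree (k n : ℕ) (H : SimpleGraph (Fin n)) : Prop :=
  k + 1 ≤ n ∧
  (∀ i j : Fin n, i.val < k + 1 → j.val < k + 1 → i ≠ j → H.Adj i j) ∧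
  (∀ j : Fin n, k + 1 ≤ j.val →
    ∃ s : Finset (Fin n), s.card = k ∧ (∀ i ∈ s, i < j) ∧
      (∀ i : Fin n, i < j → (H.Adj i j ↔ i ∈ s)) ∧
      (∀ a ∈ s, ∀ b ∈ s, a ≠ b → H.Adj a b))

/-- `G` has tree-width at most `k`: it is a subgraph of some `k`-tree. -/
def TreewidthLE (k : ℕ) {V : Type} (G : SimpleGraph V) : Prop :=
  ∃ (n : ℕ) (H : SimpleGraph (Fin n)), IsKTree k n H ∧
    ∃ f : V ↪ Fin n, ∀ u v, G.Adj u v → H.Adj (f u) (f v)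

/-- `G`, with distinguished vertices `r 0, …, r k`, is a rooted partial `k`-tree:
`G` is a subgraph of a `k`-tree in which the distinguished vertices form a clique. -/
def IsRootedPartialKTree (k : ℕ) {V : Type} (G : SimpleGraph V) (r : Fin (k + 1) → V) : Prop :=
  ∃ (n : ℕ) (H : SimpleGraph (Fin n)), IsKTree k n H ∧
    ∃ f : V ↪ Fin n, (∀ u v, G.Adj u v → H.Adj (f u) (f v)) ∧
      ∀ i j : Fin (k + 1), i ≠ j → H.Adj (f (r i)) (f (r j))

/-- Adjacency in the disjoint union of two graphs. -/
def sumAdj {V₁ V₂ : Type} (G₁ : SimpleGraph V₁) (G₂ : SimpleGraph V₂) :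
    V₁ ⊕ V₂ → V₁ ⊕ V₂ → Prop
  | Sum.inl a, Sum.inl b => G₁.Adj a b
  | Sum.inr a, Sum.inr b => G₂.Adj a b
  | _, _ => False

lemma sumAdj_symm {V₁ V₂ : Type} (G₁ : SimpleGraph V₁) (G₂ : SimpleGraph V₂) :
    ∀ x y, sumAdj G₁ G₂ x y → sumAdj G₁ G₂ y x := by
  rintro (a | a) (b | b) h <;> simp only [sumAdj] at h ⊢ <;> exact h.symm

/-- Vertices of `G₁ ⊕ G₂`: the disjoint union with `r₁ i` identified with `r₂ i`. -/
def GlueVerts {V₁ V₂ : Type} {m : ℕ} (r₁ : Fin m → V₁) (r₂ : Fin m → V₂) : Type :=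
  Quot (fun x y : V₁ ⊕ V₂ => ∃ i, x = Sum.inl (r₁ i) ∧ y = Sum.inr (r₂ i))

/-- The graph `G₁ ⊕ G₂` obtained by identifying the roots of `G₁` and `G₂` pairwise. -/
def glue {V₁ V₂ : Type} {m : ℕ} (G₁ : SimpleGraph V₁) (G₂ : SimpleGraph V₂)
    (r₁ : Fin m → V₁) (r₂ : Fin m → V₂) : SimpleGraph (GlueVerts r₁ r₂) where
  Adj x y := x ≠ y ∧ ∃ a b, sumAdj G₁ G₂ a b ∧ Quot.mk _ a = x ∧ Quot.mk _ b = y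
  symm := by
    constructor
    rintro x y ⟨hxy, a, b, hab, ha, hb⟩
    exact ⟨hxy.symm, b, a, sumAdj_symm G₁ G₂ a b hab, hb, ha⟩
  loopless := ⟨fun x h => h.1 rfl⟩

/-- The roots of the glued graph `G₁ ⊕ G₂`. -/
def glueRoot {V₁ V₂ : Type} {m : ℕ} (r₁ : Fin m → V₁) (r₂ : Fin m → V₂) (i : Fin m) :
    GlueVerts r₁ r₂ :=
  Quot.mk _ (Sum.inl (r₁ i))

/-- `c` is a `(p,q)`-coloring of `G`: colors lie in `{0, …, p-1}` and the colors of
adjacent vertices `u`, `v` satisfy `q ≤ |c u - c v| ≤ p - q`. -/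
def IsPQColoring {V : Type} (G : SimpleGraph V) (p q : ℕ) (c : V → ℕ) : Prop :=
  (∀ v, c v < p) ∧ ∀ u v, G.Adj u v →
    (q : ℤ) ≤ |(c u : ℤ) - (c v : ℤ)| ∧ |(c u : ℤ) - (c v : ℤ)| ≤ (p : ℤ) - q

def HasPQColoring {V : Type} (G : SimpleGraph V) (p q : ℕ) : Prop :=
  ∃ c : V → ℕ, IsPQColoring G p q c

/-- The circular chromatic number of `G`: the infimum of the ratios `p/q` such that
`G` has a `(p,q)`-coloring. -/
noncomputable def circChromNum {V : Type} (G : SimpleGraph V) : ℝ :=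
  sInf {r : ℝ | ∃ p q : ℕ, 0 < q ∧ HasPQColoring G p q ∧ r = (p : ℝ) / (q : ℝ)}

/-- The type of a rooted graph: the matrix of distances between the roots. -/
noncomputable def typeOf {V : Type} {m : ℕ} (G : SimpleGraph V) (r : Fin m → V) :
    Fin m → Fin m → ℕ∞ :=
  fun i j => G.edist (r i) (r j)

/-- An abstract type: a symmetric matrix with entries in `ℕ∞`, zeroes exactly on the
diagonal, satisfying the triangle inequality. -/
def IsType {m : ℕ} (M : Fin m → Fin m → ℕ∞) : Prop :=
  (∀ i j, M i j = M j i) ∧ (∀ i j, M i j = 0 ↔ i = j) ∧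
    (∀ i j l, M i l ≤ M i j + M j l)

/-- A bipartite type: `M i j + M j l + M i l` is even whenever all three entries are finite. -/
def IsBipartiteType {m : ℕ} (M : Fin m → Fin m → ℕ∞) : Prop :=
  IsType M ∧ ∀ i j l, ∀ a b c : ℕ, M i j = a → M j l = b → M i l = c → Even (a + b + c)

/-- Two types are compatible if corresponding entries have the same parity whenever
both are finite. -/
def CompatibleTypes {m : ℕ} (M M' : Fin m → Fin m → ℕ∞) : Prop :=
  ∀ i j, ∀ a b : ℕ, M i j = a → M' i j = b → (Even a ↔ Even b)

/-- `M ⪯ M'`: the types are compatible and `M i j ≤ M' i j` entrywise. -/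
def TypeLE {m : ℕ} (M M' : Fin m → Fin m → ℕ∞) : Prop :=
  CompatibleTypes M M' ∧ ∀ i j, M i j ≤ M' i j

/-- A `p`-precoloring `c` of the roots extends to a `(p,q)`-coloring of `G`. -/
def PrecoloringExtends {V : Type} {m : ℕ} (G : SimpleGraph V) (r : Fin m → V)
    (p q : ℕ) (c : Fin m → ℕ) : Prop :=
  ∃ f : V → ℕ, IsPQColoring G p q f ∧ ∀ i, f (r i) = c i




namespace GGHaux
variable {V : Type} [DecidableEq V] {G : SimpleGraph V}

omit [DecidableEq V] in
lemma closed_nodup_nil {u : V} (q : G.Walk u u) (h : q.support.Nodup) : q = Walk.nil := by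
  cases q with
  | nil => rfl
  | cons h' r =>
    exfalso
    have hm : u ∈ r.support := r.end_mem_support
    rw [Walk.support_cons, List.nodup_cons] at h
    exact h.1 hm

omit [DecidableEq V] in
lemma edge_end_length_one {u y : V} (p : G.Walk y u) (hp : p.support.Nodup) (huv : u ≠ y)
    (he : s(u, y) ∈ p.edges) : p.length = 1 := by
  induction p with
  | nil => simp at he
  | @cons a b c h' q ih =>
    rw [Walk.edges_cons, List.mem_cons] at he
    rcases he with he | he
    · rw [Sym2.eq_iff] at he
      rcases he with ⟨h1, h2⟩ | ⟨h1, h2⟩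
      · exact absurd h1 huv
      · subst h1
        have : q = Walk.nil := closed_nodup_nil q (by
          rw [Walk.support_cons, List.nodup_cons] at hp; exact hp.2)
        subst this
        simp
    · exfalso
      have : a ∈ q.support := Walk.snd_mem_support_of_mem_edges q he
      rw [Walk.support_cons, List.nodup_cons] at hp
      exact hp.1 this

lemma length_rotate' {u x : V} (w : G.Walk u u) (hx : x ∈ w.support) :
    (w.rotate x hx).length = w.length := by
  simp only [Walk.rotate, Walk.length_append]
  have := congrArg Walk.length (w.take_spec hx)
  rw [Walk.length_append] at this
  omega

lemma exists_odd_cycle' : ∀ (L : ℕ) {u : V} (w : G.Walk u u), w.length ≤ L → Odd w.length →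
    ∃ (x : V) (c : G.Walk x x), c.IsCycle ∧ Odd c.length ∧ c.length ≤ w.length := by
  intro L
  induction L with
  | zero =>
    intro u w hL hodd
    rw [Nat.le_zero] at hL
    rw [hL] at hodd
    simp at hodd
  | succ L ih =>
    intro u w hL hodd
    by_cases hnd : w.support.tail.Nodup
    · cases w with
      | nil => simp at hodd
      | @cons _ y _ h p =>
        by_cases he : s(u, y) ∈ p.edges
        · have hp : p.support.Nodup := by
            rw [Walk.support_cons] at hnd; exact hnd
          have h1 := edge_end_length_one p hp h.ne he
          rw [Walk.length_cons, h1] at hodd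
          simp [Nat.odd_iff] at hodd
        · refine ⟨u, Walk.cons h p, ?_, hodd, le_refl _⟩
          rw [Walk.cons_isCycle_iff]
          refine ⟨?_, he⟩
          rw [Walk.isPath_def]
          rw [Walk.support_cons] at hnd; exact hnd
    · have hdup : ∃ x, 2 ≤ w.support.tail.count x := by
        by_contra hno
        push_neg at hno
        exact hnd (List.nodup_iff_count_le_one.mpr (fun a => by have := hno a; omega))
      obtain ⟨x, hx2⟩ := hdup
      have hxt : x ∈ w.support.tail := by
        rw [← List.count_pos_iff]
        omega
      have hxs : x ∈ w.support := by
        rw [Walk.support_eq_cons, List.mem_cons]; right; exact hxt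
      have hlen : (w.rotate x hxs).length = w.length := length_rotate' w hxs
      have hcount : 2 ≤ (w.rotate x hxs).support.tail.count x := by
        have hrot := Walk.support_rotate w x hxs
        rw [List.Perm.count_eq hrot.perm]
        exact hx2
      cases hcx : w.rotate x hxs with
      | nil =>
        rw [hcx] at hlen
        simp only [Walk.length_nil] at hlen
        rw [← hlen] at hodd
        simp at hodd
      | @cons _ y _ h q =>
        rw [hcx] at hcount hlen
        rw [Walk.support_cons, List.tail_cons] at hcount
        have hxq : x ∈ q.support := by rw [← List.count_pos_iff]; omega
        have hspec : (q.takeUntil x hxq).append (q.dropUntil x hxq) = q := q.take_spec hxq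
        have hlsum : (q.takeUntil x hxq).length + (q.dropUntil x hxq).length = q.length := by
          have := congrArg Walk.length hspec
          rw [Walk.length_append] at this
          exact this
        have hcnt1 : (q.takeUntil x hxq).support.count x = 1 :=
          q.count_support_takeUntil_eq_one hxq
        have hsupq : q.support = (q.takeUntil x hxq).support ++ (q.dropUntil x hxq).support.tail := by
          conv_lhs => rw [← hspec]
          rw [Walk.support_append]
        have hq2ne : 1 ≤ (q.dropUntil x hxq).length := by
          by_contra h0
          push_neg at h0
          interval_cases hq2l : (q.dropUntil x hxq).length
          have : q.dropUntil x hxq = Walk.nil := by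
            cases hq : q.dropUntil x hxq with
            | nil => rfl
            | cons _ _ => rw [hq] at hq2l; simp [Walk.length_cons] at hq2l
          rw [this] at hsupq
          simp only [Walk.support_nil, List.tail_cons, List.append_nil] at hsupq
          rw [hsupq] at hcount
          omega
        set c1 := Walk.cons h (q.takeUntil x hxq) with hc1
        have hlc1 : c1.length = (q.takeUntil x hxq).length + 1 := by
          rw [hc1, Walk.length_cons]
        have htot : c1.length + (q.dropUntil x hxq).length = w.length := by
          rw [hlc1, ← hlen, Walk.length_cons]
          omega
        have hone : Odd c1.length ∨ Odd (q.dropUntil x hxq).length := by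
          rw [Nat.odd_iff] at hodd ⊢
          rw [Nat.odd_iff]
          omega
        rcases hone with ho | ho
        · obtain ⟨z, c, hc, hco, hcl⟩ := ih c1 (by omega) ho
          exact ⟨z, c, hc, hco, by omega⟩
        · obtain ⟨z, c, hc, hco, hcl⟩ := ih (q.dropUntil x hxq) (by omega) ho
          exact ⟨z, c, hc, hco, by omega⟩

end GGHaux


namespace GGH

open Fin.CommRing

def tf (k l j : ℕ) : ℕ := 4*(l+1) * (k+6)^j
def Pk (k : ℕ) : ℕ := (k+2)^2 + 1
def Rk (k l : ℕ) : ℕ := tf k l (Pk k + 1)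
def gk (k l : ℕ) : ℕ := 3 * Rk k l + 3

lemma tf_succ (k l j : ℕ) : tf k l (j+1) = (k+6) * tf k l j := by
  simp [tf, pow_succ]; ring

lemma tf_mono (k l : ℕ) : Monotone (tf k l) := by
  intro i j hij
  exact Nat.mul_le_mul_left _ (Nat.pow_le_pow_right (by omega) hij)

lemma tf_ge (k l j : ℕ) : 4*(l+1) ≤ tf k l j := by
  have h1 : 1 ≤ (k+6)^j := Nat.one_le_pow _ _ (by omega)
  calc 4*(l+1) = 4*(l+1) * 1 := by ring
  _ ≤ _ := Nat.mul_le_mul_left _ h1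

variable {n : ℕ}

noncomputable def ddf (Gx : SimpleGraph (Fin n)) (a b : Fin n) : ℕ := (Gx.edist a b).toNat

lemma ddf_comm (Gx : SimpleGraph (Fin n)) (a b : Fin n) : ddf Gx a b = ddf Gx b a := by
  rw [ddf, ddf, edist_comm]

lemma ddf_self (Gx : SimpleGraph (Fin n)) (a : Fin n) : ddf Gx a a = 0 := by
  rw [ddf, edist_self]; rfl

lemma edist_adj {Gx : SimpleGraph (Fin n)} {a b : Fin n} (h : Gx.Adj a b) :
    Gx.edist a b = 1 := by
  have hle : Gx.edist a b ≤ 1 := by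
    have := edist_le (Walk.cons h Walk.nil)
    simpa using this
  have hne : Gx.edist a b ≠ 0 := fun he => h.ne (edist_eq_zero_iff.mp he)
  exact le_antisymm hle (ENat.one_le_iff_ne_zero.mpr hne)

def Lft (l : ℕ) (Gx : SimpleGraph (Fin n)) (f : Fin n → Fin (2*l+1)) (S : Finset (Fin n))
    (lam : Fin n → ℤ) : Prop :=
  (∀ u ∈ S, ((lam u : ℤ) : Fin (2*l+1)) = f u) ∧
  ∀ u ∈ S, ∀ w ∈ S,
    lam u - lam w ≤ (ddf Gx u w : ℤ) ∧ (lam u - lam w - (ddf Gx u w : ℤ)) % 2 = 0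

def GoodS (H Gx : SimpleGraph (Fin n)) (R m : ℕ) (S : Finset (Fin n)) : Prop :=
  (∀ i ∈ S, i.val < m) ∧ (∀ a ∈ S, ∀ b ∈ S, a ≠ b → H.Adj a b) ∧
    (∀ a ∈ S, ∀ b ∈ S, Gx.edist a b ≤ (R : ℕ∞))

def INV (k l : ℕ) (H Gx : SimpleGraph (Fin n)) (m : ℕ) (f : Fin n → Fin (2*l+1)) : Prop :=
  ∀ S : Finset (Fin n), GoodS H Gx (Rk k l) m S → ∃ lam : Fin n → ℤ, Lft l Gx f S lam

def PRP (l : ℕ) (Gx : SimpleGraph (Fin n)) (m : ℕ) (f : Fin n → Fin (2*l+1)) : Prop :=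
  ∀ a b : Fin n, a.val < m → b.val < m → Gx.Adj a b →
    (cycleGraph (2*l+1)).Adj (f a) (f b)

lemma bag_lemma {k : ℕ} {H : SimpleGraph (Fin n)} (hKT : IsKTree k n H) {m : ℕ} (hmn : m < n) :
    ∃ s : Finset (Fin n), s.card ≤ k + 1 ∧ (∀ u ∈ s, u < (⟨m, hmn⟩ : Fin n)) ∧
      (∀ a ∈ s, ∀ b ∈ s, a ≠ b → H.Adj a b) ∧
      (∀ u : Fin n, u < (⟨m, hmn⟩ : Fin n) → H.Adj u ⟨m, hmn⟩ → u ∈ s) := by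
  classical
  obtain ⟨hn, hinit, hstep⟩ := hKT
  by_cases hm : k + 1 ≤ m
  · obtain ⟨s, hcard, hlt, hiff, hcl⟩ := hstep ⟨m, hmn⟩ hm
    exact ⟨s, by omega, hlt, hcl, fun u hu hadj => (hiff u hu).mp hadj⟩
  · refine ⟨Finset.univ.filter (fun u => u < (⟨m, hmn⟩ : Fin n)), ?_, ?_, ?_, ?_⟩
    · have : ∀ u ∈ Finset.univ.filter (fun u => u < (⟨m, hmn⟩ : Fin n)), u.val < k + 1 := by
        intro u hu
        have h2 := (Finset.mem_filter.mp hu).2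
        have : u.val < m := h2
        omega
      calc (Finset.univ.filter (fun u => u < (⟨m, hmn⟩ : Fin n))).card
          ≤ (Finset.univ : Finset (Fin (k+1))).card := by
            apply Finset.card_le_card_of_injOn
              (fun u => if h : u.val < k + 1 then (⟨u.val, h⟩ : Fin (k+1)) else 0)
            · intro u _; exact Finset.mem_univ _
            · intro u hu w hw heq
              rw [Finset.mem_coe] at hu hw
              simp only [dif_pos (this u hu), dif_pos (this w hw)] at heq
              have := congrArg Fin.val heq
              simp at this
              exact Fin.ext this
        _ = k + 1 := by simp
    · intro u hu; exact (Finset.mem_filter.mp hu).2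
    · intro a ha b hb hne
      apply hinit
      · have h2 := (Finset.mem_filter.mp ha).2
        have : a.val < m := h2
        omega
      · have h2 := (Finset.mem_filter.mp hb).2
        have : b.val < m := h2
        omega
      · exact hne
    · intro u hu _
      exact Finset.mem_filter.mpr ⟨Finset.mem_univ u, hu⟩

lemma gap_lemma (k l : ℕ) (Gx : SimpleGraph (Fin n)) (F : Finset (Fin n))
    (hcard : F.card ≤ k + 2) :
    ∃ j, j ≤ Pk k ∧ ∀ a ∈ F, ∀ b ∈ F,
      ¬(((tf k l j : ℕ) : ℕ∞) < Gx.edist a b ∧ Gx.edist a b ≤ ((tf k l (j+1) : ℕ) : ℕ∞)) := by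
  classical
  by_contra hno
  push_neg at hno
  have hbad : ∀ j ∈ Finset.range (Pk k + 1), ∃ p : Fin n × Fin n, p.1 ∈ F ∧ p.2 ∈ F ∧
      ((tf k l j : ℕ) : ℕ∞) < Gx.edist p.1 p.2 ∧ Gx.edist p.1 p.2 ≤ ((tf k l (j+1) : ℕ) : ℕ∞) := by
    intro j hj
    rw [Finset.mem_range] at hj
    obtain ⟨a, ha, b, hb, h1, h2⟩ := hno j (by omega)
    exact ⟨(a, b), ha, hb, h1, h2⟩
  choose pf hp1 hp2 hp3 hp4 using hbad
  have hmono : ∀ i j : ℕ, i ≤ j → (tf k l i : ℕ) ≤ tf k l j := by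
    intro i j hij
    exact Nat.mul_le_mul_left _ (Nat.pow_le_pow_right (by omega) hij)
  have key : ∀ (j1 : ℕ) (hj1 : j1 ∈ Finset.range (Pk k + 1)) (j2 : ℕ)
      (hj2 : j2 ∈ Finset.range (Pk k + 1)), j1 < j2 → pf j1 hj1 = pf j2 hj2 → False := by
    intro j1 hj1 j2 hj2 hlt heq
    have h2 := hp4 j1 hj1
    have h1 := hp3 j2 hj2
    rw [heq] at h2
    have hc : ((tf k l (j1+1) : ℕ) : ℕ∞) ≤ ((tf k l j2 : ℕ) : ℕ∞) := by
      exact_mod_cast Nat.cast_le.mpr (hmono _ _ (by omega))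
    exact absurd (lt_of_le_of_lt (le_trans h2 hc) h1) (lt_irrefl _)
  have h0mem : (0 : ℕ) ∈ Finset.range (Pk k + 1) := by simp
  have hcard2 : (Finset.range (Pk k + 1)).card ≤ (F ×ˢ F).card := by
    apply Finset.card_le_card_of_injOn
      (fun j => if h : j ∈ Finset.range (Pk k + 1) then pf j h else pf 0 h0mem)
    · intro j hj
      simp only [dif_pos (show j ∈ Finset.range (Pk k + 1) from hj)]
      exact Finset.mem_product.mpr ⟨hp1 j hj, hp2 j hj⟩
    · intro j1 hj1 j2 hj2 heq
      rw [Finset.mem_coe] at hj1 hj2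
      simp only at heq
      rw [dif_pos hj1, dif_pos hj2] at heq
      rcases lt_trichotomy j1 j2 with h | h | h
      · exact absurd (key j1 hj1 j2 hj2 h heq) (fun x => x)
      · exact h
      · exact absurd (key j2 hj2 j1 hj1 h heq.symm) (fun x => x)
  have hprod : (F ×ˢ F).card ≤ (k+2) * (k+2) := by
    rw [Finset.card_product]
    exact Nat.mul_le_mul hcard hcard
  rw [Finset.card_range] at hcard2
  have hfin : Pk k + 1 ≤ (k+2)*(k+2) := by omega
  rw [Pk, pow_two] at hfin
  omega

variable {n : ℕ}
variable {n : ℕ}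

def pull {V : Type} (G : SimpleGraph V) (emb : V ↪ Fin n) : SimpleGraph (Fin n) where
  Adj a b := a ≠ b ∧ ∃ u w, G.Adj u w ∧ emb u = a ∧ emb w = b
  symm := ⟨by rintro a b ⟨hne, u, w, h, hu, hw⟩; exact ⟨hne.symm, w, u, h.symm, hw, hu⟩⟩
  loopless := ⟨fun a h => h.1 rfl⟩

lemma pull_walk {V : Type} {G : SimpleGraph V} {emb : V ↪ Fin n} :
    ∀ {a b : Fin n} (w : (pull G emb).Walk a b) (x : V), emb x = a →
      ∃ (y : V) (w' : G.Walk x y), emb y = b ∧ w'.length = w.length := by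
  intro a b w
  induction w with
  | nil => intro x hx; exact ⟨x, Walk.nil, hx, rfl⟩
  | @cons a c b h p ih =>
    intro x hx
    have h' : a ≠ c ∧ ∃ u w, G.Adj u w ∧ emb u = a ∧ emb w = c := h
    obtain ⟨hne, u1, u2, hadj, he1, he2⟩ := h'
    have hxu : u1 = x := emb.injective (by rw [he1, hx])
    subst hxu
    obtain ⟨y, w', hy, hl⟩ := ih u2 he2
    exact ⟨y, Walk.cons hadj w', hy, by simp [Walk.length_cons, hl]⟩

section Key

variable (Gx : SimpleGraph (Fin n))

lemma ddle {a b : Fin n} {r : ℕ} (h : Gx.edist a b ≤ (r:ℕ∞)) :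
    (Gx.edist a b).toNat ≤ r ∧ ((Gx.edist a b).toNat : ℕ∞) = Gx.edist a b := by
  have hne : Gx.edist a b ≠ ⊤ := by
    intro htop; rw [htop] at h; exact (by simp : ¬ ((⊤:ℕ∞) ≤ (r:ℕ∞))) h
  have hc : ((Gx.edist a b).toNat : ℕ∞) = Gx.edist a b := ENat.coe_toNat hne
  refine ⟨?_, hc⟩
  rw [← hc] at h
  exact_mod_cast h

lemma dd_tri {a b c : Fin n} {r1 r2 : ℕ} (h1 : Gx.edist a b ≤ (r1:ℕ∞))
    (h2 : Gx.edist b c ≤ (r2:ℕ∞)) :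
    Gx.edist a c ≤ ((r1 + r2 : ℕ) : ℕ∞) ∧
      (Gx.edist a c).toNat ≤ (Gx.edist a b).toNat + (Gx.edist b c).toNat := by
  have htri : Gx.edist a c ≤ Gx.edist a b + Gx.edist b c := Gx.edist_triangle
  constructor
  · refine le_trans htri ?_
    push_cast
    exact add_le_add h1 h2
  · have h3 : Gx.edist a c ≤ ((r1+r2 : ℕ) : ℕ∞) := by
      refine le_trans htri ?_; push_cast; exact add_le_add h1 h2
    have e1 := (ddle Gx h1).2
    have e2 := (ddle Gx h2).2
    have e3 := (ddle Gx h3).2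
    rw [← e1, ← e2, ← e3] at htri
    exact_mod_cast htri

lemma even_tri {g : ℕ}
    (hgx : ∀ (x : Fin n) (w : Gx.Walk x x), Odd w.length → g ≤ w.length)
    {a b c : Fin n} {r1 r2 r3 : ℕ}
    (h1 : Gx.edist a b ≤ (r1:ℕ∞)) (h2 : Gx.edist b c ≤ (r2:ℕ∞)) (h3 : Gx.edist a c ≤ (r3:ℕ∞))
    (hbound : r1 + r2 + r3 < g) :
    ((Gx.edist a b).toNat + (Gx.edist b c).toNat + (Gx.edist a c).toNat) % 2 = 0 := by
  by_contra hodd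
  have hne1 : Gx.edist a b ≠ ⊤ := fun htop => by rw [htop] at h1; simp at h1
  have hne2 : Gx.edist b c ≠ ⊤ := fun htop => by rw [htop] at h2; simp at h2
  have hne3 : Gx.edist a c ≠ ⊤ := fun htop => by rw [htop] at h3; simp at h3
  obtain ⟨p1, hp1⟩ := Gx.exists_walk_of_edist_ne_top hne1
  obtain ⟨p2, hp2⟩ := Gx.exists_walk_of_edist_ne_top hne2
  obtain ⟨p3, hp3⟩ := Gx.exists_walk_of_edist_ne_top hne3
  set w : Gx.Walk a a := p1.append (p2.append p3.reverse) with hw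
  have hlen : w.length = p1.length + p2.length + p3.length := by
    simp [hw, Walk.length_append, Walk.length_reverse]; ring
  have hl1 : p1.length = (Gx.edist a b).toNat := by
    have := hp1; rw [← (ddle Gx h1).2] at this; exact_mod_cast this
  have hl2 : p2.length = (Gx.edist b c).toNat := by
    have := hp2; rw [← (ddle Gx h2).2] at this; exact_mod_cast this
  have hl3 : p3.length = (Gx.edist a c).toNat := by
    have := hp3; rw [← (ddle Gx h3).2] at this; exact_mod_cast this
  have hwodd : Odd w.length := by
    rw [Nat.odd_iff, hlen, hl1, hl2, hl3]
    omega
  have hge := hgx a w hwodd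
  have hle1 : (Gx.edist a b).toNat ≤ r1 := (ddle Gx h1).1
  have hle2 : (Gx.edist b c).toNat ≤ r2 := (ddle Gx h2).1
  have hle3 : (Gx.edist a c).toNat ≤ r3 := (ddle Gx h3).1
  omega

end Key


variable {l : ℕ}

lemma cast_shift (z c : ℤ) : ((z + ((2*l+1 : ℕ) : ℤ) * c : ℤ) : Fin (2*l+1)) = (z : Fin (2*l+1)) := by
  rw [Int.cast_add, Int.cast_mul, Int.cast_natCast, Fin.natCast_self]
  ring

lemma val_one_cyc (hl : 0 < l) : (1 : Fin (2*l+1)).val = 1 := by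
  rw [Fin.val_one']
  exact Nat.mod_eq_of_lt (by omega)

lemma adj_of_diff (hl : 0 < l) {a b : ℤ} (h : a - b = 1 ∨ b - a = 1) :
    (cycleGraph (2*l+1)).Adj (a : Fin (2*l+1)) (b : Fin (2*l+1)) := by
  rw [cycleGraph_adj']
  rcases h with h | h
  · left
    have : ((a : Fin (2*l+1)) - (b : Fin (2*l+1))) = ((a - b : ℤ) : Fin (2*l+1)) := by push_cast; ring
    rw [this, h]
    simpa using val_one_cyc hl
  · right
    have : ((b : Fin (2*l+1)) - (a : Fin (2*l+1))) = ((b - a : ℤ) : Fin (2*l+1)) := by push_cast; ring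
    rw [this, h]
    simpa using val_one_cyc hl


variable {n : ℕ}

lemma step (k l : ℕ) (hl : 0 < l) (H Gx : SimpleGraph (Fin n))
    (hsub : ∀ a b : Fin n, Gx.Adj a b → H.Adj a b)
    (hKT : IsKTree k n H)
    (hgx : ∀ (x : Fin n) (w : Gx.Walk x x), Odd w.length → gk k l ≤ w.length)
    (m : ℕ) (hmn : m < n) (f : Fin n → Fin (2*l+1))
    (hINV : INV k l H Gx m f) (hPRP : PRP l Gx m f) :
    ∃ f' : Fin n → Fin (2*l+1), INV k l H Gx (m+1) f' ∧ PRP l Gx (m+1) f' := by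
  classical
  set v : Fin n := ⟨m, hmn⟩ with hv
  obtain ⟨s, hscard0, hs1, hs2, hs3⟩ := bag_lemma hKT hmn
  set R : ℕ := Rk k l with hR
  set A : Finset (Fin n) := s.filter (fun u => Gx.edist u v ≤ (R : ℕ∞)) with hA
  -- A has at most k+1 elements? we only need card (insert v A) ≤ k + 2
  have hcardA : (insert v A).card ≤ k + 2 := by
    refine le_trans (Finset.card_insert_le _ _) ?_
    have hAs : A.card ≤ s.card := Finset.card_le_card (Finset.filter_subset _ _)
    omega
  obtain ⟨j, hjP, hgap⟩ := gap_lemma k l Gx (insert v A) hcardA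
  set T : ℕ := tf k l j with hT
  have hT0 : 4*(l+1) ≤ T := tf_ge k l j
  have hTsucc : tf k l (j+1) = (k+6) * T := tf_succ k l j
  have hTR : (k+6) * T ≤ R := by
    rw [← hTsucc, hR, Rk]
    exact tf_mono k l (by omega : j + 1 ≤ Pk k + 1)
  have hTleR : T ≤ R := le_trans (Nat.le_mul_of_pos_left T (by omega)) hTR
  -- gap consequences
  have hgap2 : ∀ a ∈ insert v A, ∀ b ∈ insert v A,
      Gx.edist a b ≤ ((2*T : ℕ) : ℕ∞) → Gx.edist a b ≤ ((T:ℕ) : ℕ∞) := by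
    intro a ha b hb hle
    by_contra hgt
    refine hgap a ha b hb ⟨?_, ?_⟩
    · exact lt_of_not_ge hgt
    · refine le_trans hle ?_
      rw [hTsucc]
      exact_mod_cast Nat.cast_le.mpr (Nat.mul_le_mul_right T (by omega))
  have hcross : ∀ a ∈ insert v A, ∀ b ∈ insert v A,
      ¬ (Gx.edist a b ≤ ((T:ℕ) : ℕ∞)) → (((k+6)*T : ℕ) : ℕ∞) < Gx.edist a b := by
    intro a ha b hb hgt
    by_contra hle
    push_neg at hle
    refine hgap a ha b hb ⟨lt_of_not_ge hgt, ?_⟩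
    rw [hTsucc]
    exact hle
  -- membership helpers
  have hAmem : ∀ u ∈ A, u ∈ s ∧ Gx.edist u v ≤ ((R:ℕ) : ℕ∞) := by
    intro u hu
    exact ⟨(Finset.mem_filter.mp hu).1, (Finset.mem_filter.mp hu).2⟩
  have hAins : ∀ u ∈ A, u ∈ insert v A := fun u hu => Finset.mem_insert_of_mem hu
  have hvins : v ∈ insert v A := Finset.mem_insert_self _ _
  have hAlt : ∀ u ∈ A, u.val < m := by
    intro u hu
    exact hs1 u (hAmem u hu).1
  have hAne : ∀ u ∈ A, u ≠ v := by
    intro u hu heq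
    have := hAlt u hu
    rw [heq] at this
    simp [hv] at this
  have hgkR : gk k l = 3*R + 3 := by rw [hR]; rfl
  have h6T : 6 * T ≤ (k+6) * T := Nat.mul_le_mul_right T (by omega)
  have hNT : 2*l+1 ≤ T := by omega
  -- the near-cluster K of v
  set K : Finset (Fin n) := A.filter (fun u => Gx.edist u v ≤ ((T:ℕ) : ℕ∞)) with hK
  have hKmem : ∀ u ∈ K, u ∈ A ∧ Gx.edist u v ≤ ((T:ℕ) : ℕ∞) := by
    intro u hu
    exact ⟨(Finset.mem_filter.mp hu).1, (Finset.mem_filter.mp hu).2⟩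
  have hKpair : ∀ a ∈ K, ∀ b ∈ K, Gx.edist a b ≤ ((T:ℕ) : ℕ∞) := by
    intro a ha b hb
    have h1 := (hKmem a ha).2
    have h2 := (hKmem b hb).2
    rw [SimpleGraph.edist_comm] at h2
    have h3 := (dd_tri Gx h1 h2).1
    apply hgap2 a (hAins a (hKmem a ha).1) b (hAins b (hKmem b hb).1)
    have : T + T = 2*T := by omega
    rw [this] at h3
    exact h3
  have hKgood : GoodS H Gx R m K := by
    refine ⟨?_, ?_, ?_⟩
    · intro u hu; exact hAlt u (hKmem u hu).1
    · intro a ha b hb hne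
      exact hs2 a (hAmem a (hKmem a ha).1).1 b (hAmem b (hKmem b hb).1).1 hne
    · intro a ha b hb
      exact le_trans (hKpair a ha b hb) (Nat.cast_le.mpr hTleR)
  obtain ⟨lam0, hlam0⟩ := hINV K hKgood
  -- the Helly point y
  set y : ℤ := if hKne : K.Nonempty then
      ((K.image (fun u => lam0 u - (ddf Gx u v : ℤ))).max' (hKne.image _)) else 0 with hy
  have hYfacts : ∀ u ∈ K, lam0 u - (ddf Gx u v : ℤ) ≤ y ∧ y ≤ lam0 u + (ddf Gx u v : ℤ) ∧
      (y - lam0 u - (ddf Gx u v : ℤ)) % 2 = 0 := by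
    intro u hu
    have hKne : K.Nonempty := ⟨u, hu⟩
    rw [hy, dif_pos hKne]
    obtain ⟨z, hz, hzy⟩ := Finset.mem_image.mp ((K.image (fun u => lam0 u - (ddf Gx u v : ℤ))).max'_mem (hKne.image _))
    have hlow : lam0 u - (ddf Gx u v : ℤ) ≤ (K.image (fun u => lam0 u - (ddf Gx u v : ℤ))).max' (hKne.image _) :=
      Finset.le_max' (K.image (fun u => lam0 u - (ddf Gx u v : ℤ)))
        (lam0 u - (ddf Gx u v : ℤ)) (Finset.mem_image.mpr ⟨u, hu, rfl⟩)
    have hzu := (hlam0.2 z hz u hu)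
    have hedzv := (hKmem z hz).2
    have heduv := (hKmem u hu).2
    have hedvu : Gx.edist v u ≤ ((T:ℕ) : ℕ∞) := by rw [SimpleGraph.edist_comm]; exact heduv
    have htri := (dd_tri Gx hedzv hedvu).2
    have hedzu : Gx.edist z u ≤ ((T + T : ℕ) : ℕ∞) := (dd_tri Gx hedzv hedvu).1
    have hpar := even_tri Gx hgx hedzv hedvu hedzu (by omega)
    have hddvu : ddf Gx v u = ddf Gx u v := ddf_comm Gx v u
    have hd1 : (ddf Gx z v) ≤ T := (ddle Gx hedzv).1
    have hd2 : (ddf Gx u v) ≤ T := (ddle Gx heduv).1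
    have htri' : ddf Gx z u ≤ ddf Gx z v + ddf Gx v u := htri
    have hpar' : (ddf Gx z v + ddf Gx v u + ddf Gx z u) % 2 = 0 := hpar
    refine ⟨hlow, ?_, ?_⟩
    · rw [← hzy]
      have h0 := hzu.1
      rw [hddvu] at htri'
      omega
    · rw [← hzy]
      have h1 := hzu.2
      rw [hddvu] at htri' hpar'
      omega
  -- clusters
  set CL : Fin n → Finset (Fin n) := fun u => A.filter (fun w => Gx.edist u w ≤ ((T:ℕ) : ℕ∞))
    with hCL
  have hCLsub : ∀ u, CL u ⊆ A := fun u => Finset.filter_subset _ _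
  have hCLd : ∀ u, ∀ z ∈ CL u, Gx.edist u z ≤ ((T:ℕ) : ℕ∞) := by
    intro u z hz
    exact (Finset.mem_filter.mp hz).2
  have hCLself : ∀ u ∈ A, u ∈ CL u := by
    intro u hu
    refine Finset.mem_filter.mpr ⟨hu, ?_⟩
    rw [SimpleGraph.edist_self]
    exact zero_le
  have hCLpair : ∀ u, ∀ z1 ∈ CL u, ∀ z2 ∈ CL u, Gx.edist z1 z2 ≤ ((T:ℕ) : ℕ∞) := by
    intro u z1 h1 z2 h2
    have e1 := hCLd u z1 h1
    have e2 := hCLd u z2 h2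
    rw [SimpleGraph.edist_comm] at e1
    have h3 := (dd_tri Gx e1 e2).1
    apply hgap2 z1 (hAins _ (hCLsub u h1)) z2 (hAins _ (hCLsub u h2))
    have hTT : T + T = 2*T := by omega
    rw [hTT] at h3
    exact h3
  have hCLeq : ∀ u ∈ A, ∀ w ∈ A, Gx.edist u w ≤ ((T:ℕ) : ℕ∞) → CL u = CL w := by
    intro u hu w hw huw
    have key : ∀ u' ∈ A, ∀ w' ∈ A, Gx.edist u' w' ≤ ((T:ℕ) : ℕ∞) →
        CL u' ⊆ CL w' := by
      intro u' hu' w' hw' h' z hz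
      refine Finset.mem_filter.mpr ⟨hCLsub u' hz, ?_⟩
      have e1 : Gx.edist w' u' ≤ ((T:ℕ) : ℕ∞) := by rw [SimpleGraph.edist_comm]; exact h'
      have e2 := hCLd u' z hz
      have h3 := (dd_tri Gx e1 e2).1
      apply hgap2 w' (hAins _ hw') z (hAins _ (hCLsub u' hz))
      have hTT : T + T = 2*T := by omega
      rw [hTT] at h3
      exact h3
    apply Finset.Subset.antisymm
    · exact key u hu w hw huw
    · refine key w hw u hu ?_
      rw [SimpleGraph.edist_comm]; exact huw
  have hCLgood : ∀ u ∈ A, GoodS H Gx R m (CL u) := by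
    intro u hu
    refine ⟨?_, ?_, ?_⟩
    · intro z hz; exact hAlt z (hCLsub u hz)
    · intro a ha b hb hne
      exact hs2 a (hAmem a (hCLsub u ha)).1 b (hAmem b (hCLsub u hb)).1 hne
    · intro a ha b hb
      exact le_trans (hCLpair u a ha b hb) (Nat.cast_le.mpr hTleR)
  -- choice of lifts per good set
  set nu : Finset (Fin n) → Fin n → ℤ :=
    fun St => if h : GoodS H Gx R m St then (hINV St h).choose else (fun _ => (0:ℤ)) with hnu
  have hnusp : ∀ St (h : GoodS H Gx R m St), Lft l Gx f St (nu St) := by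
    intro St h
    simp only [hnu, dif_pos h]
    exact (hINV St h).choose_spec
  -- anchor and shift, as functions of the cluster set
  set NZ : ℤ := ((2*l+1 : ℕ) : ℤ) with hNZ
  have hNZpos : 0 < NZ := by rw [hNZ]; push_cast; omega
  have hNZodd : NZ % 2 = 1 := by rw [hNZ]; push_cast; omega
  have hNZT : NZ ≤ (T : ℤ) := by rw [hNZ]; push_cast; omega
  set FB : Finset (Fin n) → Fin n := fun X => if h : X.Nonempty then X.min' h else v with hFB
  set shC : Finset (Fin n) → ℤ := fun X =>
    ((y - nu X (FB X)) - (y - nu X (FB X)) % NZ) +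
      (if (((y - nu X (FB X)) % NZ) + (ddf Gx (FB X) v : ℤ)) % 2 = 0 then 0 else NZ) with hshC
  have hshCmul : ∀ X, ∃ c : ℤ, shC X = NZ * c := by
    intro X
    rw [hshC]
    simp only
    set b := y - nu X (FB X) with hb
    refine ⟨b / NZ + (if ((b % NZ) + (ddf Gx (FB X) v : ℤ)) % 2 = 0 then 0 else 1), ?_⟩
    have hdm := Int.mul_ediv_add_emod b NZ
    by_cases hc : ((b % NZ) + (ddf Gx (FB X) v : ℤ)) % 2 = 0
    · simp only [if_pos hc]
      rw [add_zero, add_zero]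
      linarith
    · simp only [if_neg hc]
      rw [mul_add, mul_one]
      linarith
  have hshCw : ∀ X, -NZ ≤ nu X (FB X) + shC X - y ∧ nu X (FB X) + shC X - y ≤ NZ ∧
      ((nu X (FB X) + shC X - y) - (ddf Gx (FB X) v : ℤ)) % 2 = 0 := by
    intro X
    rw [hshC]
    simp only
    set b := y - nu X (FB X) with hb
    have hr0 : 0 ≤ b % NZ := Int.emod_nonneg b (by omega)
    have hr1 : b % NZ < NZ := Int.emod_lt_of_pos b hNZpos
    have hbb : nu X (FB X) = y - b := by rw [hb]; ring
    by_cases hc : ((b % NZ) + (ddf Gx (FB X) v : ℤ)) % 2 = 0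
    · simp only [if_pos hc]
      refine ⟨by omega, by omega, ?_⟩
      omega
    · simp only [if_neg hc]
      refine ⟨by omega, by omega, ?_⟩
      omega
  have hFBmem : ∀ u ∈ A, FB (CL u) ∈ CL u := by
    intro u hu
    have hne : (CL u).Nonempty := ⟨u, hCLself u hu⟩
    rw [hFB]
    simp only [dif_pos hne]
    exact (CL u).min'_mem hne
  -- the new lift
  set lamh : Fin n → ℤ := fun u => if u = v then y else
    (if Gx.edist u v ≤ ((T:ℕ) : ℕ∞) then lam0 u else nu (CL u) u + shC (CL u)) with hlamh
  have hlamhv : lamh v = y := by rw [hlamh]; simp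
  have hlamhK : ∀ u ∈ K, lamh u = lam0 u := by
    intro u hu
    rw [hlamh]
    simp only
    rw [if_neg (hAne u (hKmem u hu).1), if_pos (hKmem u hu).2]
  have hnotK : ∀ u ∈ A, u ∉ K → ¬ (Gx.edist u v ≤ ((T:ℕ) : ℕ∞)) := by
    intro u hu hnk hc
    exact hnk (Finset.mem_filter.mpr ⟨hu, hc⟩)
  have hlamhF : ∀ u ∈ A, u ∉ K → lamh u = nu (CL u) u + shC (CL u) := by
    intro u hu hnk
    rw [hlamh]
    simp only
    rw [if_neg (hAne u hu), if_neg (hnotK u hu hnk)]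
  have hddKT : ∀ u ∈ K, ddf Gx u v ≤ T := by
    intro u hu
    exact (ddle Gx (hKmem u hu).2).1
  -- parity through v
  have hPV : ∀ a ∈ A, ∀ b ∈ A, Gx.edist a b ≤ ((R:ℕ) : ℕ∞) →
      ((ddf Gx a v : ℤ) + ddf Gx v b + ddf Gx a b) % 2 = 0 := by
    intro a ha b hb hab
    have e1 : Gx.edist a v ≤ ((R:ℕ) : ℕ∞) := (hAmem a ha).2
    have e2 : Gx.edist v b ≤ ((R:ℕ) : ℕ∞) := by rw [SimpleGraph.edist_comm]; exact (hAmem b hb).2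
    have hp := even_tri Gx hgx e1 e2 hab (by rw [hgkR]; omega)
    have hp' : (ddf Gx a v + ddf Gx v b + ddf Gx a b) % 2 = 0 := hp
    omega
  -- facts for far vertices
  have Hf : ∀ u ∈ A, u ∉ K →
      (-(T:ℤ) - NZ ≤ lamh u - y ∧ lamh u - y ≤ (T:ℤ) + NZ) ∧
      ((lamh u - y - (ddf Gx u v : ℤ)) % 2 = 0) ∧ ((k+6)*T < ddf Gx u v) := by
    intro u hu hnk
    have hgood := hCLgood u hu
    have hlft := hnusp (CL u) hgood
    have hfb := hFBmem u hu
    have hu' : u ∈ CL u := hCLself u hu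
    have hpairU := hlft.2 u hu' (FB (CL u)) hfb
    have hpairD := hlft.2 (FB (CL u)) hfb u hu'
    have hedufb : Gx.edist u (FB (CL u)) ≤ ((T:ℕ) : ℕ∞) := hCLd u (FB (CL u)) hfb
    have hddufb : ddf Gx u (FB (CL u)) ≤ T := (ddle Gx hedufb).1
    have hW := hshCw (CL u)
    have hFBA : FB (CL u) ∈ A := hCLsub u hfb
    have e2 : Gx.edist (FB (CL u)) v ≤ ((R:ℕ) : ℕ∞) := (hAmem _ hFBA).2
    have e3 : Gx.edist u v ≤ ((R:ℕ) : ℕ∞) := (hAmem u hu).2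
    have hp := even_tri Gx hgx hedufb e2 e3 (by rw [hgkR]; omega)
    have hp' : (ddf Gx u (FB (CL u)) + ddf Gx (FB (CL u)) v + ddf Gx u v) % 2 = 0 := hp
    have hcr := hcross u (hAins u hu) v hvins (hnotK u hu hnk)
    have hcrn : (k+6)*T < ddf Gx u v := by
      have hfin := (ddle Gx e3).2
      rw [← hfin] at hcr
      exact_mod_cast hcr
    have hlam := hlamhF u hu hnk
    have hdd1 := hpairU.1
    have hdd2 := hpairD.1
    have hddp := hpairU.2
    rw [hlam]
    have hcomm : ddf Gx (FB (CL u)) u = ddf Gx u (FB (CL u)) := ddf_comm Gx _ _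
    rw [hcomm] at hdd2
    refine ⟨⟨?_, ?_⟩, ?_, hcrn⟩
    · omega
    · omega
    · omega
  -- the master tightness claim
  have htight : ∀ a ∈ insert v A, ∀ b ∈ insert v A, Gx.edist a b ≤ ((R:ℕ) : ℕ∞) →
      lamh a - lamh b ≤ (ddf Gx a b : ℤ) ∧
      (lamh a - lamh b - (ddf Gx a b : ℤ)) % 2 = 0 := by
    intro a ha b hb hab
    rcases Finset.mem_insert.mp ha with rfl | haA
    · rcases Finset.mem_insert.mp hb with rfl | hbA
      · rw [ddf_self]
        simp
      · -- a = v, b ∈ A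
        rw [hlamhv]
        have hcm : ddf Gx v b = ddf Gx b v := ddf_comm Gx v b
        by_cases hbK : b ∈ K
        · have hY := hYfacts b hbK
          rw [hlamhK b hbK, hcm]
          omega
        · have hF := Hf b hbA hbK
          rw [hcm]
          omega
    · rcases Finset.mem_insert.mp hb with rfl | hbA
      · -- a ∈ A, b = v
        rw [hlamhv]
        by_cases haK : a ∈ K
        · have hY := hYfacts a haK
          rw [hlamhK a haK]
          omega
        · have hF := Hf a haA haK
          omega
      · -- a, b ∈ A
        have hPVab := hPV a haA b hbA hab
        by_cases haK : a ∈ K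
        · by_cases hbK : b ∈ K
          · have hp := hlam0.2 a haK b hbK
            rw [hlamhK a haK, hlamhK b hbK]
            exact hp
          · -- a near, b far
            have hYa := hYfacts a haK
            have hFb := Hf b hbA hbK
            have hdaT := hddKT a haK
            -- dd b v ≤ dd b a + dd a v
            have htr := (dd_tri Gx (by rw [SimpleGraph.edist_comm]; exact hab) (hKmem a haK).2).2
            have htr' : ddf Gx b v ≤ ddf Gx b a + ddf Gx a v := htr
            have hcm : ddf Gx b a = ddf Gx a b := ddf_comm Gx b a
            have hcm2 : ddf Gx v b = ddf Gx b v := ddf_comm Gx v b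
            rw [hlamhK a haK]
            rw [hcm] at htr'
            rw [hcm2] at hPVab
            omega
        · by_cases hbK : b ∈ K
          · -- a far, b near
            have hYb := hYfacts b hbK
            have hFa := Hf a haA haK
            have hdbT := hddKT b hbK
            have htr := (dd_tri Gx hab (hKmem b hbK).2).2
            have htr' : ddf Gx a v ≤ ddf Gx a b + ddf Gx b v := htr
            have hcm2 : ddf Gx v b = ddf Gx b v := ddf_comm Gx v b
            rw [hlamhK b hbK]
            rw [hcm2] at hPVab
            omega
          · -- both far
            by_cases hsame : Gx.edist a b ≤ ((T:ℕ) : ℕ∞)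
            · have hclab := hCLeq a haA b hbA hsame
              have hbCL : b ∈ CL a := by rw [hclab]; exact hCLself b hbA
              have haCL : a ∈ CL a := hCLself a haA
              have hp := (hnusp (CL a) (hCLgood a haA)).2 a haCL b hbCL
              rw [hlamhF a haA haK, hlamhF b hbA hbK, ← hclab]
              have : nu (CL a) a + shC (CL a) - (nu (CL a) b + shC (CL a)) =
                  nu (CL a) a - nu (CL a) b := by ring
              rw [this]
              exact hp
            · have hFa := Hf a haA haK
              have hFb := Hf b hbA hbK
              have hcr := hcross a (hAins a haA) b (hAins b hbA) hsame
              have hcrn : (k+6)*T < ddf Gx a b := by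
                have hfin := (ddle Gx hab).2
                rw [← hfin] at hcr
                exact_mod_cast hcr
              have hcm2 : ddf Gx v b = ddf Gx b v := ddf_comm Gx v b
              rw [hcm2] at hPVab
              omega
  -- the new coloring
  set f' : Fin n → Fin (2*l+1) := Function.update f v ((y : ℤ) : Fin (2*l+1)) with hf'
  have hf'v : f' v = ((y : ℤ) : Fin (2*l+1)) := by rw [hf']; simp
  have hf'o : ∀ u : Fin n, u ≠ v → f' u = f u := by
    intro u hu
    rw [hf']
    exact Function.update_of_ne hu _ _
  have hpi : ∀ a ∈ insert v A, ((lamh a : ℤ) : Fin (2*l+1)) = f' a := by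
    intro a ha
    rcases Finset.mem_insert.mp ha with rfl | haA
    · rw [hlamhv, hf'v]
    · rw [hf'o a (hAne a haA)]
      by_cases haK : a ∈ K
      · rw [hlamhK a haK]
        exact hlam0.1 a haK
      · rw [hlamhF a haA haK]
        obtain ⟨c, hc⟩ := hshCmul (CL a)
        rw [hc, hNZ, cast_shift]
        exact (hnusp (CL a) (hCLgood a haA)).1 a (hCLself a haA)
  have hmemS : ∀ u : Fin n, u.val < m + 1 → u ≠ v → Gx.edist u v ≤ ((R:ℕ) : ℕ∞) →
      H.Adj u v → u ∈ A := by
    intro u hu1 hu2 hu3 hu4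
    have hultv : u < v := by
      have : u.val ≠ m := fun hh => hu2 (Fin.ext hh)
      show u.val < v.val
      rw [hv]
      simp
      omega
    refine Finset.mem_filter.mpr ⟨hs3 u hultv hu4, hu3⟩
  refine ⟨f', ?_, ?_⟩
  · -- INV (m+1)
    intro S hGood
    by_cases hvS : v ∈ S
    · have hsub' : ∀ u ∈ S, u ∈ insert v A := by
        intro u huS
        by_cases huv : u = v
        · rw [huv]; exact hvins
        · refine Finset.mem_insert_of_mem (hmemS u (hGood.1 u huS) huv
            (hGood.2.2 u huS v hvS) (hGood.2.1 u huS v hvS huv))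
      refine ⟨lamh, ?_, ?_⟩
      · intro u huS
        exact hpi u (hsub' u huS)
      · intro u huS w hwS
        have ht := htight u (hsub' u huS) w (hsub' w hwS) (hGood.2.2 u huS w hwS)
        exact ht
    · have hGood' : GoodS H Gx R m S := by
        refine ⟨?_, hGood.2.1, hGood.2.2⟩
        intro u huS
        have h1 := hGood.1 u huS
        have h2 : u ≠ v := fun hh => hvS (hh ▸ huS)
        have : u.val ≠ m := fun hh => h2 (Fin.ext (by rw [hh, hv]))
        omega
      obtain ⟨lam, hlam⟩ := hINV S hGood'
      refine ⟨lam, ?_, hlam.2⟩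
      intro u huS
      rw [hf'o u (fun hh => hvS (hh ▸ huS))]
      exact hlam.1 u huS
  · -- PRP (m+1)
    have hedge : ∀ aa : Fin n, aa.val < m + 1 → aa ≠ v → Gx.Adj aa v →
        (cycleGraph (2*l+1)).Adj (f' aa) (f' v) := by
      intro aa h1 h2 hadj
      have hed : Gx.edist aa v = 1 := edist_adj hadj
      have hedR : Gx.edist aa v ≤ ((R:ℕ) : ℕ∞) := by
        rw [hed]
        exact_mod_cast Nat.one_le_cast.mpr (by omega : 1 ≤ R)
      have hedT : Gx.edist aa v ≤ ((T:ℕ) : ℕ∞) := by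
        rw [hed]
        exact_mod_cast Nat.one_le_cast.mpr (by omega : 1 ≤ T)
      have haaA : aa ∈ A := hmemS aa h1 h2 hedR (hsub _ _ hadj)
      have haaK : aa ∈ K := Finset.mem_filter.mpr ⟨haaA, hedT⟩
      have hdd1 : ddf Gx aa v = 1 := by rw [ddf, hed]; rfl
      have hY := hYfacts aa haaK
      rw [hdd1] at hY
      have hcases : y - lam0 aa = 1 ∨ lam0 aa - y = 1 := by omega
      have hc1 : f' aa = ((lam0 aa : ℤ) : Fin (2*l+1)) := by
        rw [hf'o aa h2]
        exact (hlam0.1 aa haaK).symm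
      rw [hc1, hf'v]
      exact (adj_of_diff hl (by omega : (y:ℤ) - lam0 aa = 1 ∨ lam0 aa - y = 1)).symm
    intro a b ha hb hadj
    by_cases hav : a = v
    · by_cases hbv : b = v
      · exfalso
        rw [hav, hbv] at hadj
        exact hadj.ne rfl
      · rw [hav]
        rw [hav] at hadj
        exact (hedge b hb hbv hadj.symm).symm
    · by_cases hbv : b = v
      · rw [hbv]
        rw [hbv] at hadj
        exact hedge a ha hav hadj
      · have h1 : a.val < m := by
          have : a.val ≠ m := fun hh => hav (Fin.ext (by rw [hh, hv]))
          omega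
        have h2 : b.val < m := by
          have : b.val ≠ m := fun hh => hbv (Fin.ext (by rw [hh, hv]))
          omega
        rw [hf'o a hav, hf'o b hbv]
        exact hPRP a b h1 h2 hadj

variable {n : ℕ}

lemma master (k l : ℕ) (hl : 0 < l) (H Gx : SimpleGraph (Fin n))
    (hsub : ∀ a b : Fin n, Gx.Adj a b → H.Adj a b)
    (hKT : IsKTree k n H)
    (hgx : ∀ (x : Fin n) (w : Gx.Walk x x), Odd w.length → gk k l ≤ w.length) :
    ∀ m, m ≤ n → ∃ f : Fin n → Fin (2*l+1), INV k l H Gx m f ∧ PRP l Gx m f := by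
  intro m
  induction m with
  | zero =>
    intro _
    refine ⟨fun _ => (0 : Fin (2*l+1)), ?_, ?_⟩
    · intro S hGood
      refine ⟨fun _ => 0, ?_, ?_⟩
      · intro u hu
        exact absurd (hGood.1 u hu) (by omega)
      · intro u hu
        exact absurd (hGood.1 u hu) (by omega)
    · intro a b ha hb _
      exact absurd ha (by omega)
  | succ m ih =>
    intro hm
    obtain ⟨f, hI, hP⟩ := ih (by omega)
    exact step k l hl H Gx hsub hKT hgx m (by omega) f hI hP

lemma key (k l : ℕ) (hl : 0 < l) (H Gx : SimpleGraph (Fin n))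
    (hsub : ∀ a b : Fin n, Gx.Adj a b → H.Adj a b)
    (hKT : IsKTree k n H)
    (hgx : ∀ (x : Fin n) (w : Gx.Walk x x), Odd w.length → gk k l ≤ w.length) :
    ∃ f : Fin n → Fin (2*l+1), ∀ a b : Fin n, Gx.Adj a b →
      (cycleGraph (2*l+1)).Adj (f a) (f b) := by
  obtain ⟨f, _, hP⟩ := master k l hl H Gx hsub hKT hgx n le_rfl
  exact ⟨f, fun a b hadj => hP a b a.isLt b.isLt hadj⟩

lemma pull_adj_iff {V : Type} {G : SimpleGraph V} {emb : V ↪ Fin n} {a b : Fin n} :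
    (pull G emb).Adj a b ↔ a ≠ b ∧ ∃ u w, G.Adj u w ∧ emb u = a ∧ emb w = b := Iff.rfl

theorem final (k l : ℕ) (hk : 0 < k) (hl : 0 < l) (V : Type) (G : SimpleGraph V)
    (htw : ∃ (n : ℕ) (H : SimpleGraph (Fin n)), IsKTree k n H ∧
      ∃ f : V ↪ Fin n, ∀ u v, G.Adj u v → H.Adj (f u) (f v))
    (hgirth : ∀ (u : V) (w : G.Walk u u), w.IsCycle → Odd w.length → gk k l ≤ w.length) :
    Nonempty (G →g SimpleGraph.cycleGraph (2 * l + 1)) := by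
  classical
  obtain ⟨n, H, hKT, emb, hemb⟩ := htw
  set Gx : SimpleGraph (Fin n) := pull G emb with hGx
  have hsub : ∀ a b : Fin n, Gx.Adj a b → H.Adj a b := by
    intro a b hadj
    rw [hGx, pull_adj_iff] at hadj
    obtain ⟨hne, u, w, h, hu, hw⟩ := hadj
    rw [← hu, ← hw]
    exact hemb u w h
  have hgx : ∀ (x : Fin n) (w : Gx.Walk x x), Odd w.length → gk k l ≤ w.length := by
    intro x w hodd
    rcases hw : w with _ | ⟨h, p⟩
    · rw [hw] at hodd
      simp at hodd
    · rw [hw] at hodd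
      have h' := h
      rw [hGx, pull_adj_iff] at h'
      obtain ⟨hne, u1, u2, hadj, he1, he2⟩ := h'
      obtain ⟨z, w', hz, hlen⟩ := pull_walk (Walk.cons h p) u1 he1
      have hzu : z = u1 := emb.injective (hz.trans he1.symm)
      subst hzu
      have hodd' : Odd w'.length := by rw [hlen]; exact hodd
      obtain ⟨x', c, hc, hcodd, hclen⟩ :=
        GGHaux.exists_odd_cycle' w'.length w' le_rfl hodd'
      have := hgirth x' c hc hcodd
      omega
  obtain ⟨f, hf⟩ := key k l hl H Gx hsub hKT hgx
  refine ⟨⟨fun x => f (emb x), ?_⟩⟩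
  intro u w hadj
  apply hf
  rw [hGx, pull_adj_iff]
  exact ⟨fun hh => (G.ne_of_adj hadj) (emb.injective hh), u, w, hadj, rfl, rfl⟩

end GGH

/-- For all positive integers `k` and `l`, there exists `g` such that every
finite graph with tree-width at most `k` and odd-girth at least `g` admits a graph
homomorphism to the cycle of length `2l + 1`. -/
theorem stmt1 (k l : ℕ) (hk : 0 < k) (hl : 0 < l) :
    ∃ g : ℕ, ∀ (V : Type) [Fintype V] (G : SimpleGraph V), TreewidthLE k G →
      (∀ (u : V) (w : G.Walk u u), w.IsCycle → Odd w.length → g ≤ w.length) →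
      Nonempty (G →g SimpleGraph.cycleGraph (2 * l + 1)) := by
  refine ⟨GGH.gk k l, ?_⟩
  intro V _ G htw hgirth
  exact GGH.final k l hk hl V G htw hgirth
end

section
/- For all positive integers p and q with 2 < p/q, there exists an integer d such that the following holds: for every bipartite graph H and every partial coloring φ assigning colors from {0,...,p-1} to a set A of vertices of H whose pairwise distances in H are all at least d, there exists a (p,q)-coloring of H that coincides with φ on A. -/
open SimpleGraph

/-- One step of size `δ` (with `q ≤ δ ≤ p - q`) modulo `p` satisfies the `(p,q)` condition. -/
private lemma circ_step {p q u δ : ℕ} (hu : u < p) (hδ1 : q ≤ δ) (hδ2 : δ + q ≤ p) :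
    (q : ℤ) ≤ |(u : ℤ) - ((u + δ) % p : ℕ)| ∧ |(u : ℤ) - ((u + δ) % p : ℕ)| ≤ (p : ℤ) - q := by
  rcases Nat.lt_or_ge (u + δ) p with h | h
  · rw [Nat.mod_eq_of_lt h]
    have habs : |(u : ℤ) - ((u + δ : ℕ) : ℤ)| = (δ : ℤ) := by
      push_cast
      rw [show (u : ℤ) - ((u : ℤ) + δ) = -δ by ring, abs_neg, abs_of_nonneg (by positivity)]
    rw [habs]
    constructor <;> push_cast <;> omega
  · have hmod : (u + δ) % p = u + δ - p := by
      rw [Nat.mod_eq_sub_mod h, Nat.mod_eq_of_lt (by omega)]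
    rw [hmod]
    have hcast : ((u + δ - p : ℕ) : ℤ) = (u : ℤ) + δ - p := by omega
    have habs : |(u : ℤ) - ((u + δ - p : ℕ) : ℤ)| = (p : ℤ) - δ := by
      rw [hcast, show (u : ℤ) - ((u : ℤ) + δ - p) = (p : ℤ) - δ by ring,
        abs_of_nonneg (by omega)]
    rw [habs]
    constructor <;> omega

private lemma diff_q {p q : ℕ} (hpq : 2 * q ≤ p) {u v : ℕ}
    (h : (u = 0 ∧ v = q) ∨ (u = q ∧ v = 0)) :
    (q : ℤ) ≤ |(u : ℤ) - (v : ℤ)| ∧ |(u : ℤ) - (v : ℤ)| ≤ (p : ℤ) - q := by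
  have habs : |(u : ℤ) - (v : ℤ)| = (q : ℤ) := by
    rcases h with ⟨rfl, rfl⟩ | ⟨rfl, rfl⟩ <;> simp
  rw [habs]
  constructor <;> omega

/-- The transition function: starts at `x`, ends alternating `q*b, q*(1-b), …` from
time `2*p` on, making steps of size `q` or `q+1` modulo `p`. -/
private def gfun (p q x b t : ℕ) : ℕ :=
  if t ≤ 2 * p then (x + t * q + min ((q * b + p - x) % p) t) % p
  else q * ((b + t) % 2)

private lemma gfun_lt {p q x b : ℕ} (hp : 0 < p) (hpq : 2 * q < p) (hb : b ≤ 1) (t : ℕ) :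
    gfun p q x b t < p := by
  unfold gfun
  split
  · exact Nat.mod_lt _ hp
  · have h2 : (b + t) % 2 ≤ 1 := by omega
    have := Nat.mul_le_mul_left q h2
    omega

private lemma gfun_zero {p q x b : ℕ} (hx : x < p) : gfun p q x b 0 = x := by
  unfold gfun
  rw [if_pos (Nat.zero_le _)]
  simp [Nat.mod_eq_of_lt hx]

private lemma gfun_T {p q x b : ℕ} (hp : 0 < p) (hpq : 2 * q < p) (hx : x < p) (hb : b ≤ 1) :
    gfun p q x b (2 * p) = q * b := by
  unfold gfun
  rw [if_pos le_rfl]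
  have hs : (q * b + p - x) % p < p := Nat.mod_lt _ hp
  have hmin : min ((q * b + p - x) % p) (2 * p) = (q * b + p - x) % p := by omega
  rw [hmin, Nat.add_mod_mod]
  have hqb : q * b ≤ q * 1 := Nat.mul_le_mul_left q hb
  have he : x + 2 * p * q + (q * b + p - x) = q * b + (2 * q + 1) * p := by
    have h1 : 2 * p * q = 2 * q * p := by ring
    have h2 : (2 * q + 1) * p = 2 * q * p + p := by ring
    rw [h1, h2]
    omega
  rw [he, Nat.add_mul_mod_self_right, Nat.mod_eq_of_lt (by omega)]

private lemma gfun_step {p q x b : ℕ} (hp : 0 < p) (hq : 0 < q) (hpq : 2 * q < p)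
    (hx : x < p) (hb : b ≤ 1) (t : ℕ) :
    (q : ℤ) ≤ |(gfun p q x b t : ℤ) - (gfun p q x b (t + 1) : ℤ)| ∧
      |(gfun p q x b t : ℤ) - (gfun p q x b (t + 1) : ℤ)| ≤ (p : ℤ) - q := by
  rcases Nat.lt_or_ge t (2 * p) with ht | ht
  · -- both times in the transition zone
    set s := (q * b + p - x) % p with hs
    have e1 : gfun p q x b t = (x + t * q + min s t) % p := by
      unfold gfun; rw [if_pos (by omega)]
    have e2 : gfun p q x b (t + 1) = (x + (t + 1) * q + min s (t + 1)) % p := by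
      unfold gfun; rw [if_pos (by omega)]
    set δ : ℕ := q + min s (t + 1) - min s t with hδ
    have hδ1 : q ≤ δ := by omega
    have hδ2 : δ ≤ q + 1 := by omega
    have e3 : x + (t + 1) * q + min s (t + 1) = x + t * q + min s t + δ := by
      have hmul : (t + 1) * q = t * q + q := by ring
      omega
    have e4 : gfun p q x b (t + 1) = (gfun p q x b t + δ) % p := by
      rw [e2, e3, e1, Nat.mod_add_mod]
    have hlt : gfun p q x b t < p := by rw [e1]; exact Nat.mod_lt _ hp
    rw [e4]
    exact circ_step hlt hδ1 (by omega)
  · rcases Nat.eq_or_lt_of_le ht with h1 | h1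
    · -- t = 2 * p exactly
      have h1' : t = 2 * p := h1.symm
      subst h1'
      have e2 : gfun p q x b (2 * p + 1) = q * ((b + 1) % 2) := by
        unfold gfun
        rw [if_neg (by omega)]
        congr 1
        omega
      rw [gfun_T hp hpq hx hb, e2]
      have hcase : (b = 0 ∧ (b + 1) % 2 = 1) ∨ (b = 1 ∧ (b + 1) % 2 = 0) := by omega
      rcases hcase with ⟨eb, e1⟩ | ⟨eb, e1⟩
      · exact diff_q hpq.le (Or.inl ⟨by rw [eb]; ring, by rw [e1]; ring⟩)
      · exact diff_q hpq.le (Or.inr ⟨by rw [eb]; ring, by rw [e1]; ring⟩)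
    · -- t > 2 * p : alternating zone
      have e1 : gfun p q x b t = q * ((b + t) % 2) := by
        unfold gfun; rw [if_neg (by omega)]
      have e2 : gfun p q x b (t + 1) = q * ((b + t + 1) % 2) := by
        unfold gfun
        rw [if_neg (by omega), ← Nat.add_assoc]
      rw [e1, e2]
      have hcase : ((b + t) % 2 = 0 ∧ (b + t + 1) % 2 = 1) ∨
          ((b + t) % 2 = 1 ∧ (b + t + 1) % 2 = 0) := by omega
      rcases hcase with ⟨f1, f2⟩ | ⟨f1, f2⟩
      · exact diff_q hpq.le (Or.inl ⟨by rw [f1]; ring, by rw [f2]; ring⟩)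
      · exact diff_q hpq.le (Or.inr ⟨by rw [f1]; ring, by rw [f2]; ring⟩)

private lemma walk_parity {V : Type} {H : SimpleGraph V} (β : H.Coloring (Fin 2)) :
    ∀ {u v : V} (w : H.Walk u v), ((β u : ℕ) + w.length) % 2 = (β v : ℕ) % 2 := by
  intro u v w
  induction w with
  | nil => simp
  | @cons a c d h w ih =>
    have hne : (β a : ℕ) ≠ (β c : ℕ) := fun hh => β.valid h (Fin.val_injective hh)
    have h1 : (β a : ℕ) < 2 := (β a).isLt
    have h2 : (β c : ℕ) < 2 := (β c).isLt
    simp only [SimpleGraph.Walk.length_cons]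
    omega

/-- For all positive integers `p`, `q` with `2 < p/q`, there exists `d` such
that: for every bipartite graph `H` and every precoloring `φ` with colors from
`{0, …, p-1}` of a set `A` of vertices whose pairwise distances are at least `d`, there is
a `(p,q)`-coloring of `H` coinciding with `φ` on `A`. -/
theorem stmt4 (p q : ℕ) (hp : 0 < p) (hq : 0 < q) (hpq : 2 * q < p) :
    ∃ d : ℕ, ∀ (V : Type) [Fintype V] (H : SimpleGraph V), H.Colorable 2 →
      ∀ (A : Set V) (φ : V → ℕ), (∀ a ∈ A, φ a < p) →
        (∀ u ∈ A, ∀ v ∈ A, u ≠ v → (d : ℕ∞) ≤ H.edist u v) →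
        ∃ c : V → ℕ, IsPQColoring H p q c ∧ ∀ a ∈ A, c a = φ a := by
  classical
  refine ⟨4 * p + 3, ?_⟩
  intro V _ H hcol A φ hφ hA
  obtain ⟨β⟩ := hcol
  set b : V → ℕ := fun v => (β v : ℕ) with hbdef
  have hble : ∀ v, b v ≤ 1 := fun v => Nat.lt_succ_iff.mp (β v).isLt
  have par : ∀ u v : V, ∀ N : ℕ, H.edist u v = N → (b u + N) % 2 = b v % 2 := by
    intro u v N hN
    obtain ⟨w, hw⟩ := SimpleGraph.exists_walk_of_edist_eq_coe hN
    rw [← hw]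
    exact walk_parity β w
  have hadjb : ∀ u v : V, H.Adj u v → b u ≠ b v := fun u v h hh =>
    β.valid h (Fin.val_injective hh)
  have uniq : ∀ v a a' : V, a ∈ A → a' ∈ A →
      H.edist v a ≤ ((2 * p + 1 : ℕ) : ℕ∞) → H.edist v a' ≤ ((2 * p + 1 : ℕ) : ℕ∞) →
      a = a' := by
    intro v a a' ha ha' h1 h2
    by_contra hne
    have h3 := hA a ha a' ha' hne
    have h4 : H.edist a a' ≤ ((2 * p + 1 : ℕ) : ℕ∞) + ((2 * p + 1 : ℕ) : ℕ∞) :=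
      le_trans (H.edist_triangle (v := v))
        (add_le_add (by rwa [SimpleGraph.edist_comm]) h2)
    have h5 : ((4 * p + 3 : ℕ) : ℕ∞) ≤ ((2 * p + 1 : ℕ) : ℕ∞) + ((2 * p + 1 : ℕ) : ℕ∞) :=
      le_trans h3 h4
    have h6 : (4 * p + 3 : ℕ) ≤ (2 * p + 1) + (2 * p + 1) := by exact_mod_cast h5
    omega
  set c : V → ℕ := fun v =>
    if h : ∃ a, a ∈ A ∧ H.edist v a ≤ ((2 * p : ℕ) : ℕ∞)
    then gfun p q (φ h.choose) (b h.choose) (H.edist v h.choose).toNat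
    else q * b v with hc
  have edgecase : ∀ u v : V, H.Adj u v →
      ∀ h : ∃ a, a ∈ A ∧ H.edist u a ≤ ((2 * p : ℕ) : ℕ∞),
      (q : ℤ) ≤ |(c u : ℤ) - (c v : ℤ)| ∧ |(c u : ℤ) - (c v : ℤ)| ≤ (p : ℤ) - q := by
    intro u v huv h
    obtain ⟨ha, hd⟩ := h.choose_spec
    set a := h.choose with hadef
    have hfin : H.edist u a ≠ ⊤ := ne_top_of_le_ne_top (ENat.coe_ne_top _) hd
    set t : ℕ := (H.edist u a).toNat with ht
    have hedt : H.edist u a = (t : ℕ∞) := (ENat.coe_toNat hfin).symm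
    have htle : t ≤ 2 * p := by
      rw [hedt] at hd
      exact_mod_cast hd
    have hcu : c u = gfun p q (φ a) (b a) t := by rw [hc]; exact dif_pos h
    have hvd : H.edist v a ≤ ((t + 1 : ℕ) : ℕ∞) := by
      calc H.edist v a ≤ H.edist v u + H.edist u a := H.edist_triangle
        _ = ((t + 1 : ℕ) : ℕ∞) := by
            rw [SimpleGraph.edist_eq_one_iff_adj.mpr huv.symm, hedt]
            push_cast
            ring
    by_cases hv : ∃ a', a' ∈ A ∧ H.edist v a' ≤ ((2 * p : ℕ) : ℕ∞)
    · obtain ⟨ha', hd'⟩ := hv.choose_spec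
      have haa : hv.choose = a :=
        uniq v hv.choose a ha' ha
          (le_trans hd' (by exact_mod_cast Nat.le_succ (2 * p)))
          (le_trans hvd (by exact_mod_cast (by omega : t + 1 ≤ 2 * p + 1)))
      have hfin' : H.edist v a ≠ ⊤ :=
        ne_top_of_le_ne_top (ENat.coe_ne_top _) hvd
      set t' : ℕ := (H.edist v a).toNat with ht'
      have hedt' : H.edist v a = (t' : ℕ∞) := (ENat.coe_toNat hfin').symm
      have hcv : c v = gfun p q (φ a) (b a) t' := by
        have h1 : c v = gfun p q (φ hv.choose) (b hv.choose) (H.edist v hv.choose).toNat := by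
          rw [hc]; exact dif_pos hv
        rw [h1, haa, ← ht']
      have htt1 : t' ≤ t + 1 := by
        rw [hedt'] at hvd
        exact_mod_cast hvd
      have htt2 : t ≤ t' + 1 := by
        have h2 : H.edist u a ≤ H.edist u v + H.edist v a := H.edist_triangle
        rw [SimpleGraph.edist_eq_one_iff_adj.mpr huv, hedt', hedt] at h2
        have h3 : (t : ℕ∞) ≤ ((1 + t' : ℕ) : ℕ∞) := by
          rw [Nat.cast_add, Nat.cast_one]
          exact h2
        have h4 : t ≤ 1 + t' := by exact_mod_cast h3
        omega
      have hpu : (b a + t) % 2 = b u % 2 :=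
        par a u t (by rw [SimpleGraph.edist_comm]; exact hedt)
      have hpv : (b a + t') % 2 = b v % 2 :=
        par a v t' (by rw [SimpleGraph.edist_comm]; exact hedt')
      have hbuv : b u ≠ b v := hadjb u v huv
      have hcases : t' = t + 1 ∨ t = t' + 1 := by
        have := hble u
        have := hble v
        omega
      rcases hcases with hcase | hcase
      · rw [hcu, hcv, hcase]
        exact gfun_step hp hq hpq (hφ a ha) (hble a) t
      · rw [hcu, hcv, hcase, abs_sub_comm]
        exact gfun_step hp hq hpq (hφ a ha) (hble a) t'
    · have hvfar : ¬ H.edist v a ≤ ((2 * p : ℕ) : ℕ∞) := fun hcon => hv ⟨a, ha, hcon⟩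
      have ht2p : t = 2 * p := by
        have h1 : ((2 * p : ℕ) : ℕ∞) < H.edist v a := lt_of_not_ge hvfar
        have h2 : ((2 * p : ℕ) : ℕ∞) < ((t + 1 : ℕ) : ℕ∞) := lt_of_lt_of_le h1 hvd
        have h3 : 2 * p < t + 1 := by exact_mod_cast h2
        omega
      have hcv : c v = q * b v := by rw [hc]; exact dif_neg hv
      have hbu : b u = b a := by
        have hpar := par a u t (by rw [SimpleGraph.edist_comm]; exact hedt)
        rw [ht2p] at hpar
        have := hble u
        have := hble a
        omega
      have hcueq : c u = q * b u := by
        rw [hcu, ht2p, gfun_T hp hpq (hφ a ha) (hble a), hbu]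
      rw [hcueq, hcv]
      have h1 := hadjb u v huv
      have h2 := hble u
      have h3 := hble v
      have hcase : (b u = 0 ∧ b v = 1) ∨ (b u = 1 ∧ b v = 0) := by omega
      rcases hcase with ⟨e1, e2⟩ | ⟨e1, e2⟩
      · exact diff_q hpq.le (Or.inl ⟨by rw [e1]; ring, by rw [e2]; ring⟩)
      · exact diff_q hpq.le (Or.inr ⟨by rw [e1]; ring, by rw [e2]; ring⟩)
  have key : ∀ u v : V, H.Adj u v →
      (q : ℤ) ≤ |(c u : ℤ) - (c v : ℤ)| ∧ |(c u : ℤ) - (c v : ℤ)| ≤ (p : ℤ) - q := by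
    intro u v huv
    by_cases h1 : ∃ a, a ∈ A ∧ H.edist u a ≤ ((2 * p : ℕ) : ℕ∞)
    · exact edgecase u v huv h1
    · by_cases h2 : ∃ a, a ∈ A ∧ H.edist v a ≤ ((2 * p : ℕ) : ℕ∞)
      · have hsym := edgecase v u huv.symm h2
        rwa [abs_sub_comm] at hsym
      · have hcu : c u = q * b u := by rw [hc]; exact dif_neg h1
        have hcv : c v = q * b v := by rw [hc]; exact dif_neg h2
        rw [hcu, hcv]
        have ha1 := hadjb u v huv
        have ha2 := hble u
        have ha3 := hble v
        have hcase : (b u = 0 ∧ b v = 1) ∨ (b u = 1 ∧ b v = 0) := by omega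
        rcases hcase with ⟨e1, e2⟩ | ⟨e1, e2⟩
        · exact diff_q hpq.le (Or.inl ⟨by rw [e1]; ring, by rw [e2]; ring⟩)
        · exact diff_q hpq.le (Or.inr ⟨by rw [e1]; ring, by rw [e2]; ring⟩)
  refine ⟨c, ⟨?_, fun u v huv => key u v huv⟩, ?_⟩
  · intro v
    by_cases h : ∃ a, a ∈ A ∧ H.edist v a ≤ ((2 * p : ℕ) : ℕ∞)
    · have e : c v = gfun p q (φ h.choose) (b h.choose) (H.edist v h.choose).toNat := by
        rw [hc]; exact dif_pos h
      rw [e]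
      exact gfun_lt hp hpq (hble _) _
    · have e : c v = q * b v := by rw [hc]; exact dif_neg h
      rw [e]
      have h2 := hble v
      have := Nat.mul_le_mul_left q h2
      omega
  · intro a haA
    have hPa : ∃ a', a' ∈ A ∧ H.edist a a' ≤ ((2 * p : ℕ) : ℕ∞) :=
      ⟨a, haA, by rw [SimpleGraph.edist_self]; exact zero_le⟩
    obtain ⟨ha', hd'⟩ := hPa.choose_spec
    have haa : hPa.choose = a :=
      uniq a hPa.choose a ha' haA
        (le_trans hd' (by exact_mod_cast Nat.le_succ (2 * p)))
        (by rw [SimpleGraph.edist_self]; exact zero_le)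
    have e : c a = gfun p q (φ hPa.choose) (b hPa.choose) (H.edist a hPa.choose).toNat := by
      rw [hc]; exact dif_pos hPa
    rw [e, haa, SimpleGraph.edist_self]
    simpa using gfun_zero (hφ a haA)
end

section
/- Let G¹ and G² be two bipartite rooted partial k-trees with types M¹ and M² such that there exists a bipartite type M⁰ with M⁰ ⪯ M¹ and M⁰ ⪯ M². Then M¹ and M² are compatible, G¹ ⊕ G² is a bipartite rooted partial k-tree, and its type M satisfies M⁰ ⪯ M. -/
open SimpleGraph

section Soft

lemma zmod2_ne_iff (a b : ZMod 2) : a ≠ b ↔ a + b = 1 := by revert a b; decide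

lemma walk_parity_s7 {V : Type} {G : SimpleGraph V} {c : V → ZMod 2}
    (hc : ∀ u v, G.Adj u v → c u ≠ c v) {u v : V} (W : G.Walk u v) :
    c u + c v = (W.length : ZMod 2) := by
  induction W with
  | nil => simp [CharTwo.add_self_eq_zero]
  | @cons a b w h p ih =>
      have h1 : c a + c b = 1 := (zmod2_ne_iff _ _).mp (hc _ _ h)
      have hbb : c b + c b = 0 := CharTwo.add_self_eq_zero _
      have hca : c a = 1 + c b := by linear_combination h1 - hbb
      rw [Walk.length_cons, hca]
      push_cast
      rw [add_assoc, ih]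
      ring

lemma even_iff_cast_eq {a b : ℕ} : ((a : ZMod 2) = (b : ZMod 2)) ↔ (Even a ↔ Even b) := by
  rw [ZMod.natCast_eq_natCast_iff', Nat.even_iff, Nat.even_iff]
  omega

lemma exists_coloring_matching {V : Type} (G : SimpleGraph V) (hb : G.Colorable 2)
    {m : ℕ} (r : Fin m → V) (d : Fin m → ZMod 2)
    (hd : ∀ i j (a : ℕ), G.edist (r i) (r j) = a → d i + d j = (a : ZMod 2)) :
    ∃ c : V → ZMod 2, (∀ u v, G.Adj u v → c u ≠ c v) ∧ ∀ i, c (r i) = d i := by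
  classical
  obtain ⟨C⟩ := hb
  set c₀ : V → ZMod 2 := fun v => ((C v : Fin 2).val : ZMod 2) with hc₀
  have hprop : ∀ u v, G.Adj u v → c₀ u ≠ c₀ v := by
    intro u v huv
    have := C.valid huv
    revert this
    have : ∀ x y : Fin 2, x ≠ y → ((x.val : ZMod 2) ≠ (y.val : ZMod 2)) := by decide
    exact fun h => this _ _ h
  set δ : V → ZMod 2 := fun v =>
    if h : ∃ i, G.Reachable v (r i) then d h.choose - c₀ (r h.choose) else 0 with hδ
  -- parity of roots wrt c₀
  have hroots : ∀ i j, G.Reachable (r i) (r j) → d i - c₀ (r i) = d j - c₀ (r j) := by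
    intro i j hr
    have hne : G.edist (r i) (r j) ≠ ⊤ := edist_ne_top_iff_reachable.mpr hr
    obtain ⟨a, ha⟩ : ∃ a : ℕ, G.edist (r i) (r j) = a := by
      lift G.edist (r i) (r j) to ℕ using hne with a
      exact ⟨a, rfl⟩
    obtain ⟨p, hp⟩ := exists_walk_of_edist_eq_coe ha
    have h1 := walk_parity_s7 hprop p
    rw [hp] at h1
    have h2 := hd i j a ha
    have e1 : d j + d j = 0 := CharTwo.add_self_eq_zero _
    have e2 : c₀ (r j) + c₀ (r j) = 0 := CharTwo.add_self_eq_zero _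
    linear_combination h2 - h1 - e1 + e2
  have hinv : ∀ v i, G.Reachable v (r i) → δ v = d i - c₀ (r i) := by
    intro v i hvi
    have hex : ∃ i, G.Reachable v (r i) := ⟨i, hvi⟩
    rw [hδ]
    simp only [dif_pos hex]
    exact hroots _ _ ((hex.choose_spec.symm).trans hvi)
  have hδreach : ∀ u v, G.Reachable u v → δ u = δ v := by
    intro u v huv
    by_cases h : ∃ i, G.Reachable u (r i)
    · obtain ⟨i, hi⟩ := h
      rw [hinv u i hi, hinv v i (huv.symm.trans hi)]
    · have h' : ¬ ∃ i, G.Reachable v (r i) := by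
        rintro ⟨i, hi⟩; exact h ⟨i, huv.trans hi⟩
      rw [hδ]; simp only [dif_neg h, dif_neg h']
  refine ⟨fun v => c₀ v + δ v, ?_, ?_⟩
  · intro u v huv
    show c₀ u + δ u ≠ c₀ v + δ v
    rw [hδreach u v huv.reachable]
    intro h
    exact hprop u v huv (add_right_cancel h)
  · intro i
    show c₀ (r i) + δ (r i) = d i
    rw [hinv (r i) i (Reachable.refl _)]
    ring
end Soft

section Chunk2

lemma exists_d {m : ℕ} (M₀ : Fin (m + 1) → Fin (m + 1) → ℕ∞) (hM₀ : IsBipartiteType M₀) :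
    ∃ d : Fin (m + 1) → ZMod 2, ∀ i j (a : ℕ), M₀ i j = (a : ℕ∞) → d i + d j = (a : ZMod 2) := by
  classical
  obtain ⟨⟨hsymm, hzero, htri⟩, hbip⟩ := hM₀
  have hrefl : ∀ i, M₀ i i = 0 := fun i => (hzero i i).mpr rfl
  set R : Fin (m + 1) → Finset (Fin (m + 1)) :=
    fun i => Finset.univ.filter (fun j => M₀ j i ≠ ⊤) with hR
  have hmem : ∀ i, i ∈ R i := by intro i; simp [hR, hrefl i]
  have hne : ∀ i, (R i).Nonempty := fun i => ⟨i, hmem i⟩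
  have hRcongr : ∀ i j, M₀ i j ≠ ⊤ → R i = R j := by
    intro i j hij
    ext x
    simp only [hR, Finset.mem_filter, Finset.mem_univ, true_and]
    constructor
    · intro hx
      exact ne_top_of_le_ne_top (WithTop.add_ne_top.mpr ⟨hx, hij⟩) (htri x i j)
    · intro hx
      have hji : M₀ j i ≠ ⊤ := by rw [hsymm j i]; exact hij
      exact ne_top_of_le_ne_top (WithTop.add_ne_top.mpr ⟨hx, hji⟩) (htri x j i)
  set base : Fin (m + 1) → Fin (m + 1) := fun i => (R i).min' (hne i) with hbase
  have hbaseR : ∀ i, M₀ (base i) i ≠ ⊤ := by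
    intro i
    have := (R i).min'_mem (hne i)
    simp only [hR, Finset.mem_filter, Finset.mem_univ, true_and] at this
    exact this
  have hbasecongr : ∀ i j, M₀ i j ≠ ⊤ → base i = base j := by
    intro i j hij
    simp only [hbase]
    congr 1
    exact hRcongr i j hij
  refine ⟨fun i => ((M₀ (base i) i).toNat : ZMod 2), ?_⟩
  intro i j a ha
  have hij : M₀ i j ≠ ⊤ := by rw [ha]; exact ENat.coe_ne_top a
  have hb : base i = base j := hbasecongr i j hij
  set b := base i with hbdef
  have h1 : M₀ b i = ((M₀ b i).toNat : ℕ∞) := (ENat.coe_toNat (hbaseR i)).symm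
  have h2 : M₀ b j = ((M₀ b j).toNat : ℕ∞) := by
    rw [hb]; exact (ENat.coe_toNat (hbaseR j)).symm
  have heven := hbip b i j _ a _ h1.symm.symm ha h2.symm.symm
  -- heven : Even ((M₀ b i).toNat + a + (M₀ b j).toNat)
  have hcast : (((M₀ b i).toNat + a + (M₀ b j).toNat : ℕ) : ZMod 2) = 0 := by
    rw [ZMod.natCast_eq_zero_iff]
    exact even_iff_two_dvd.mp heven
  push_cast at hcast
  have haa : ((a : ZMod 2)) + ((a : ZMod 2)) = 0 := CharTwo.add_self_eq_zero _
  show (((M₀ b i).toNat : ZMod 2)) + (((M₀ (base j) j).toNat : ZMod 2)) = (a : ZMod 2)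
  rw [← hb]
  linear_combination hcast - haa

lemma glue_proper {V₁ V₂ : Type} {m : ℕ} (G₁ : SimpleGraph V₁) (G₂ : SimpleGraph V₂)
    (r₁ : Fin m → V₁) (r₂ : Fin m → V₂) (c₁ : V₁ → ZMod 2) (c₂ : V₂ → ZMod 2)
    (h₁ : ∀ u v, G₁.Adj u v → c₁ u ≠ c₁ v) (h₂ : ∀ u v, G₂.Adj u v → c₂ u ≠ c₂ v)
    (hagree : ∀ i, c₁ (r₁ i) = c₂ (r₂ i)) :
    ∃ c : GlueVerts r₁ r₂ → ZMod 2,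
      (∀ x y, (glue G₁ G₂ r₁ r₂).Adj x y → c x ≠ c y) ∧
      ∀ i, c (glueRoot r₁ r₂ i) = c₁ (r₁ i) := by
  refine ⟨Quot.lift (Sum.elim c₁ c₂) ?_, ?_, fun i => rfl⟩
  · rintro x y ⟨i, rfl, rfl⟩; exact hagree i
  · rintro x y ⟨hne, a, b, hab, rfl, rfl⟩
    rcases a with u | u <;> rcases b with v | v <;> simp only [sumAdj] at hab
    · exact h₁ _ _ hab
    · exact h₂ _ _ hab

lemma glue_edist_ge {V₁ V₂ : Type} {m : ℕ} (G₁ : SimpleGraph V₁) (G₂ : SimpleGraph V₂)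
    (r₁ : Fin (m + 1) → V₁) (r₂ : Fin (m + 1) → V₂) (M₀ : Fin (m + 1) → Fin (m + 1) → ℕ∞)
    (hM₀ : IsType M₀)
    (hle₁ : ∀ i j, M₀ i j ≤ G₁.edist (r₁ i) (r₁ j))
    (hle₂ : ∀ i j, M₀ i j ≤ G₂.edist (r₂ i) (r₂ j)) (i j : Fin (m + 1)) :
    M₀ i j ≤ (glue G₁ G₂ r₁ r₂).edist (glueRoot r₁ r₂ i) (glueRoot r₁ r₂ j) := by
  obtain ⟨hsymm, hzero, htri⟩ := hM₀
  set pot : V₁ ⊕ V₂ → ℕ∞ := Sum.elim (fun u => ⨅ t, G₁.edist u (r₁ t) + M₀ t j)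
      (fun u => ⨅ t, G₂.edist u (r₂ t) + M₀ t j) with hpot
  have hpotroot₁ : ∀ i', pot (Sum.inl (r₁ i')) = M₀ i' j := by
    intro i'
    apply le_antisymm
    · refine (iInf_le _ i').trans ?_
      simp [SimpleGraph.edist_self]
    · refine le_iInf fun t => ?_
      calc M₀ i' j ≤ M₀ i' t + M₀ t j := htri i' t j
        _ ≤ _ := add_le_add_left (hle₁ i' t) _
  have hpotroot₂ : ∀ i', pot (Sum.inr (r₂ i')) = M₀ i' j := by
    intro i'
    apply le_antisymm
    · refine (iInf_le _ i').trans ?_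
      simp [SimpleGraph.edist_self]
    · refine le_iInf fun t => ?_
      calc M₀ i' j ≤ M₀ i' t + M₀ t j := htri i' t j
        _ ≤ _ := add_le_add_left (hle₂ i' t) _
  have hwd : ∀ x y, (∃ i', x = Sum.inl (r₁ i') ∧ y = Sum.inr (r₂ i')) → pot x = pot y := by
    rintro x y ⟨i', rfl, rfl⟩
    rw [hpotroot₁, hpotroot₂]
  set ψ : GlueVerts r₁ r₂ → ℕ∞ := Quot.lift pot (fun x y h => hwd x y h) with hψ
  have hlip : ∀ x y, (glue G₁ G₂ r₁ r₂).Adj x y → ψ x ≤ 1 + ψ y := by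
    rintro x y ⟨hne, a, b, hab, rfl, rfl⟩
    show pot a ≤ 1 + pot b
    rcases a with u | u <;> rcases b with v | v <;> simp only [sumAdj] at hab
    · obtain ⟨t₀, ht₀⟩ := Finite.exists_min (fun t => G₁.edist v (r₁ t) + M₀ t j)
      have hpotv : pot (Sum.inl v) = G₁.edist v (r₁ t₀) + M₀ t₀ j :=
        le_antisymm (iInf_le _ t₀) (le_iInf ht₀)
      have h1 : G₁.edist u (r₁ t₀) ≤ 1 + G₁.edist v (r₁ t₀) := by
        have h2 := SimpleGraph.edist_triangle (G := G₁) (u := u) (v := v) (w := r₁ t₀)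
        rwa [edist_eq_one_iff_adj.mpr hab] at h2
      calc pot (Sum.inl u) ≤ G₁.edist u (r₁ t₀) + M₀ t₀ j := iInf_le _ t₀
        _ ≤ (1 + G₁.edist v (r₁ t₀)) + M₀ t₀ j := add_le_add_left h1 _
        _ = 1 + pot (Sum.inl v) := by rw [hpotv, add_assoc]
    · obtain ⟨t₀, ht₀⟩ := Finite.exists_min (fun t => G₂.edist v (r₂ t) + M₀ t j)
      have hpotv : pot (Sum.inr v) = G₂.edist v (r₂ t₀) + M₀ t₀ j :=
        le_antisymm (iInf_le _ t₀) (le_iInf ht₀)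
      have h1 : G₂.edist u (r₂ t₀) ≤ 1 + G₂.edist v (r₂ t₀) := by
        have h2 := SimpleGraph.edist_triangle (G := G₂) (u := u) (v := v) (w := r₂ t₀)
        rwa [edist_eq_one_iff_adj.mpr hab] at h2
      calc pot (Sum.inr u) ≤ G₂.edist u (r₂ t₀) + M₀ t₀ j := iInf_le _ t₀
        _ ≤ (1 + G₂.edist v (r₂ t₀)) + M₀ t₀ j := add_le_add_left h1 _
        _ = 1 + pot (Sum.inr v) := by rw [hpotv, add_assoc]
  have hwalk : ∀ (x y : GlueVerts r₁ r₂) (W : (glue G₁ G₂ r₁ r₂).Walk x y),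
      ψ x ≤ ψ y + (W.length : ℕ∞) := by
    intro x y W
    induction W with
    | nil => simp
    | cons h p ih =>
        refine (hlip _ _ h).trans ?_
        rw [SimpleGraph.Walk.length_cons]
        push_cast
        calc 1 + ψ _ ≤ 1 + (ψ _ + (p.length : ℕ∞)) := add_le_add_right ih _
          _ = _ := by ring
  by_cases hr : (glue G₁ G₂ r₁ r₂).Reachable (glueRoot r₁ r₂ i) (glueRoot r₁ r₂ j)
  · obtain ⟨W, hW⟩ := hr.exists_walk_length_eq_edist
    have h0 : ψ (glueRoot r₁ r₂ j) = M₀ j j := hpotroot₁ j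
    have hψj : ψ (glueRoot r₁ r₂ j) = 0 := by rw [h0, (hzero j j).mpr rfl]
    calc M₀ i j = ψ (glueRoot r₁ r₂ i) := (hpotroot₁ i).symm
      _ ≤ ψ (glueRoot r₁ r₂ j) + (W.length : ℕ∞) := hwalk _ _ W
      _ = (W.length : ℕ∞) := by rw [hψj, zero_add]
      _ = _ := hW
  · rw [SimpleGraph.edist_eq_top_of_not_reachable hr]; exact le_top

end Chunk2

section KTreeAux

lemma down_finset {n : ℕ} (s : Finset (Fin (n + 1))) (hs : ∀ x ∈ s, x.val < n) :
    ∃ s' : Finset (Fin n), s'.image Fin.castSucc = s ∧ s'.card = s.card ∧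
      (∀ x : Fin n, x.castSucc ∈ s ↔ x ∈ s') := by
  classical
  set s' := Finset.univ.filter (fun i : Fin n => i.castSucc ∈ s) with hs'
  have himg : s'.image Fin.castSucc = s := by
    ext x
    simp only [hs', Finset.mem_image, Finset.mem_filter, Finset.mem_univ, true_and]
    constructor
    · rintro ⟨a, ha, rfl⟩; exact ha
    · intro hx
      refine ⟨⟨x.val, hs x hx⟩, ?_, ?_⟩
      · have hx' : Fin.castSucc (⟨x.val, hs x hx⟩ : Fin n) = x := by
          apply Fin.ext; simp
        rw [hx']; exact hx
      · apply Fin.ext; simp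
  refine ⟨s', himg, ?_, ?_⟩
  · rw [← himg, Finset.card_image_of_injective _ (Fin.castSucc_injective n)]
  · intro x
    simp only [hs', Finset.mem_filter, Finset.mem_univ, true_and]

lemma card_small {n m : ℕ} (h : m ≤ n) :
    (Finset.univ.filter (fun q : Fin n => q.val < m)).card = m := by
  classical
  have : Finset.univ.filter (fun q : Fin n => q.val < m) =
      (Finset.univ : Finset (Fin m)).image (Fin.castLE h) := by
    ext x
    simp only [Finset.mem_filter, Finset.mem_univ, true_and, Finset.mem_image]
    constructor
    · intro hx
      exact ⟨⟨x.val, hx⟩, by apply Fin.ext; simp⟩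
    · rintro ⟨a, rfl⟩
      exact a.isLt
  rw [this, Finset.card_image_of_injective _ (Fin.castLE_injective h)]
  simp

lemma isKTree_delete {k n : ℕ} (H : SimpleGraph (Fin (n + 1))) (h : IsKTree k (n + 1) H)
    (hn : k + 1 ≤ n) : IsKTree k n (H.comap Fin.castSucc) := by
  obtain ⟨h1, h2, h3⟩ := h
  refine ⟨hn, ?_, ?_⟩
  · intro i j hi hj hij
    simp only [SimpleGraph.comap_adj]
    exact h2 _ _ (by simpa using hi) (by simpa using hj)
      (fun hc => hij (Fin.castSucc_injective _ hc))
  · intro j hj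
    obtain ⟨s, hcard, hlt, hchar, hclq⟩ := h3 j.castSucc (by simpa using hj)
    have hs : ∀ x ∈ s, x.val < n := by
      intro x hx
      have h' : x < j.castSucc := hlt x hx
      have : x.val < j.val := h'
      omega
    obtain ⟨s', himg, hcard', hmem⟩ := down_finset s hs
    refine ⟨s', by rw [hcard', hcard], ?_, ?_, ?_⟩
    · intro i hi
      have : i.castSucc < j.castSucc := hlt _ ((hmem i).mpr hi)
      exact (Fin.castSucc_lt_castSucc_iff).mp this
    · intro i hij'
      rw [SimpleGraph.comap_adj]
      rw [hchar i.castSucc (Fin.castSucc_lt_castSucc_iff.mpr hij')]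
      exact hmem i
    · intro a ha b hb hab
      rw [SimpleGraph.comap_adj]
      exact hclq _ ((hmem a).mpr ha) _ ((hmem b).mpr hb)
        (fun hc => hab (Fin.castSucc_injective _ hc))

lemma last_nbhd {k n : ℕ} (H : SimpleGraph (Fin (n + 1))) (h : IsKTree k (n + 1) H)
    (hn : k + 1 ≤ n) :
    ∃ t : Finset (Fin (n + 1)), t.card = k ∧ (∀ x ∈ t, x.val < n) ∧
      (∀ x, H.Adj x (Fin.last n) ↔ x ∈ t) ∧ (∀ a ∈ t, ∀ b ∈ t, a ≠ b → H.Adj a b) := by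
  obtain ⟨h1, h2, h3⟩ := h
  obtain ⟨t, hcard, hlt, hchar, hclq⟩ := h3 (Fin.last n) (by simp; omega)
  refine ⟨t, hcard, ?_, ?_, hclq⟩
  · intro x hx
    have h' : x < Fin.last n := hlt x hx
    simpa [Fin.lt_def] using h'
  · intro x
    by_cases hx : x = Fin.last n
    · subst hx
      constructor
      · intro hadj; exact absurd hadj (SimpleGraph.irrefl _)
      · intro hmem; exact absurd (hlt _ hmem) (lt_irrefl _)
    · have hxlt : x < Fin.last n := by
        rw [Fin.lt_def]
        simp only [Fin.val_last]
        have := x.isLt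
        have hne : x.val ≠ n := fun hc => hx (Fin.ext (by simp [hc]))
        omega
      exact hchar x hxlt

lemma extend_clique {k : ℕ} {n : ℕ} (hn : k + 1 ≤ n) :
    ∀ H : SimpleGraph (Fin n), IsKTree k n H →
    ∀ s : Finset (Fin n), s.card = k → (∀ a ∈ s, ∀ b ∈ s, a ≠ b → H.Adj a b) →
    ∃ w, w ∉ s ∧ ∀ a ∈ s, H.Adj w a := by
  induction n, hn using Nat.le_induction with
  | base =>
      intro H hH s hcard hclq
      have hne : s ≠ Finset.univ := by
        intro h
        rw [h, Finset.card_univ] at hcard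
        simp at hcard
      obtain ⟨w, _, hw⟩ := Finset.exists_of_ssubset (Finset.ssubset_univ_iff.mpr hne)
      refine ⟨w, hw, fun a ha => ?_⟩
      exact hH.2.1 w a (w.isLt) (a.isLt) (fun hc => hw (hc ▸ ha))
  | succ n hn IH =>
      intro H hH s hcard hclq
      obtain ⟨t, htcard, htlt, htchar, htclq⟩ := last_nbhd H hH hn
      by_cases hv : Fin.last n ∈ s
      · have hk : 1 ≤ k := by
          rcases Nat.eq_zero_or_pos k with hk0 | hk1
          · rw [hk0] at hcard
            rw [Finset.card_eq_zero] at hcard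
            rw [hcard] at hv
            simp at hv
          · exact hk1
        have hsub : s.erase (Fin.last n) ⊆ t := by
          intro a ha
          obtain ⟨hane, has⟩ := Finset.mem_erase.mp ha
          exact (htchar a).mp (hclq a has _ hv hane)
        have hns : ¬ t ⊆ s.erase (Fin.last n) := by
          intro hsub'
          have := Finset.card_le_card hsub'
          rw [htcard, Finset.card_erase_of_mem hv, hcard] at this
          omega
        obtain ⟨w, hwt, hws⟩ := Finset.not_subset.mp hns
        have hwlast : w ≠ Fin.last n := by
          intro hc
          have := htlt w hwt
          rw [hc] at this
          simp at this
        refine ⟨w, ?_, ?_⟩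
        · intro hw
          exact hws (Finset.mem_erase.mpr ⟨hwlast, hw⟩)
        · intro a ha
          by_cases hav : a = Fin.last n
          · subst hav
            exact (htchar w).mpr hwt
          · have hat : a ∈ t := hsub (Finset.mem_erase.mpr ⟨hav, ha⟩)
            have hwa : w ≠ a := by
              intro hc
              exact hws (hc ▸ Finset.mem_erase.mpr ⟨hav, ha⟩)
            exact htclq w hwt a hat hwa
      · have hs : ∀ x ∈ s, x.val < n := by
          intro x hx
          have hne : x ≠ Fin.last n := fun hc => hv (hc ▸ hx)
          have := x.isLt
          have : x.val ≠ n := fun hc => hne (Fin.ext (by simp [hc]))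
          omega
        obtain ⟨sm, himg, hcard', hmem⟩ := down_finset s hs
        have hHm := isKTree_delete H hH hn
        have hclqm : ∀ a ∈ sm, ∀ b ∈ sm, a ≠ b → (H.comap Fin.castSucc).Adj a b := by
          intro a ha b hb hab
          rw [SimpleGraph.comap_adj]
          exact hclq _ ((hmem a).mpr ha) _ ((hmem b).mpr hb)
            (fun hc => hab (Fin.castSucc_injective _ hc))
        obtain ⟨wm, hw1, hw2⟩ :=
          IH (H.comap Fin.castSucc) hHm sm (by rw [hcard', hcard]) hclqm
        refine ⟨wm.castSucc, ?_, ?_⟩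
        · intro hw
          exact hw1 ((hmem wm).mp hw)
        · intro a ha
          have han : a.val < n := hs a ha
          have heq : Fin.castSucc (⟨a.val, han⟩ : Fin n) = a := by apply Fin.ext; simp
          have ha' : (⟨a.val, han⟩ : Fin n) ∈ sm := by
            apply (hmem _).mp
            rw [heq]; exact ha
          have hadj := hw2 _ ha'
          rw [SimpleGraph.comap_adj] at hadj
          rwa [heq] at hadj

end KTreeAux

section PermFirst

lemma perm_first {k n : ℕ} (K : SimpleGraph (Fin n)) (hK : IsKTree k n K)
    (τ : Fin n ≃ Fin n) (hτ : ∀ x : Fin n, k + 1 ≤ x.val → τ x = x) :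
    ∃ K' : SimpleGraph (Fin n), IsKTree k n K' ∧ ∀ u v, K.Adj u v ↔ K'.Adj (τ u) (τ v) := by
  classical
  obtain ⟨h1, h2, h3⟩ := hK
  have hτsymm_big : ∀ x : Fin n, k + 1 ≤ x.val → τ.symm x = x := by
    intro x hx
    conv_lhs => rw [← hτ x hx]
    exact τ.symm_apply_apply x
  have hsmall : ∀ x : Fin n, x.val < k + 1 → (τ x).val < k + 1 := by
    intro x hx
    by_contra hc
    push_neg at hc
    have := hτ (τ x) hc
    have := τ.injective this
    rw [this] at hc
    omega
  have hsymm_small : ∀ x : Fin n, x.val < k + 1 → (τ.symm x).val < k + 1 := by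
    intro x hx
    by_contra hc
    push_neg at hc
    have h' := hτ (τ.symm x) hc
    rw [τ.apply_symm_apply] at h'
    rw [← h'] at hc
    omega
  refine ⟨K.comap τ.symm, ⟨h1, ?_, ?_⟩, ?_⟩
  · intro i j hi hj hij
    rw [SimpleGraph.comap_adj]
    exact h2 _ _ (hsymm_small i hi) (hsymm_small j hj)
      (fun hc => hij (τ.symm.injective hc))
  · intro j hj
    have hjfix : τ.symm j = j := hτsymm_big j hj
    obtain ⟨t, htcard, htlt, htchar, htclq⟩ := h3 j hj
    refine ⟨t.image τ, ?_, ?_, ?_, ?_⟩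
    · rw [Finset.card_image_of_injective _ τ.injective, htcard]
    · intro i hi
      obtain ⟨a, ha, rfl⟩ := Finset.mem_image.mp hi
      have halt : a < j := htlt a ha
      rcases Nat.lt_or_ge a.val (k + 1) with hs | hb
      · have := hsmall a hs
        rw [Fin.lt_def]
        omega
      · rw [hτ a hb]; exact halt
    · intro i hij
      rw [SimpleGraph.comap_adj, hjfix]
      have hlt' : τ.symm i < j := by
        rcases Nat.lt_or_ge i.val (k + 1) with hs | hb
        · have := hsymm_small i hs
          rw [Fin.lt_def]
          omega
        · rw [hτsymm_big i hb]; exact hij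
      rw [htchar _ hlt']
      constructor
      · intro hmem
        refine Finset.mem_image.mpr ⟨_, hmem, τ.apply_symm_apply i⟩
      · intro hmem
        obtain ⟨a, ha, haeq⟩ := Finset.mem_image.mp hmem
        have : a = τ.symm i := by rw [← haeq]; exact (τ.symm_apply_apply a).symm
        rwa [← this]
    · intro a ha b hb hab
      obtain ⟨a', ha', rfl⟩ := Finset.mem_image.mp ha
      obtain ⟨b', hb', rfl⟩ := Finset.mem_image.mp hb
      rw [SimpleGraph.comap_adj, τ.symm_apply_apply, τ.symm_apply_apply]
      exact htclq a' ha' b' hb' (fun hc => hab (hc ▸ rfl))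
  · intro u v
    rw [SimpleGraph.comap_adj, τ.symm_apply_apply, τ.symm_apply_apply]

end PermFirst

section Reroot

lemma fin_last_or_cast {n : ℕ} (u : Fin (n + 1)) :
    u = Fin.last n ∨ ∃ x : Fin n, u = x.castSucc := by
  rcases Fin.eq_castSucc_or_eq_last u with ⟨x, rfl⟩ | rfl
  · exact Or.inr ⟨x, rfl⟩
  · exact Or.inl rfl

lemma reroot {k : ℕ} {n : ℕ} (hn : k + 1 ≤ n) :
    ∀ H : SimpleGraph (Fin n), IsKTree k n H →
    ∀ C : Finset (Fin n), C.card = k + 1 → (∀ a ∈ C, ∀ b ∈ C, a ≠ b → H.Adj a b) →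
    ∃ (K : SimpleGraph (Fin n)) (e : Fin n ≃ Fin n), IsKTree k n K ∧
      (∀ u v, H.Adj u v ↔ K.Adj (e u) (e v)) ∧ ∀ c ∈ C, ((e c) : ℕ) < k + 1 := by
  induction n, hn using Nat.le_induction with
  | base =>
      intro H hH C hcard hclq
      exact ⟨H, Equiv.refl _, hH, fun u v => by simp, fun c hc => c.isLt⟩
  | succ n hn IH =>
      intro H hH C hcard hclq
      obtain ⟨t, htcard, htlt, htchar, htclq⟩ := last_nbhd H hH hn
      have hHm := isKTree_delete H hH hn
      set Hm := H.comap (Fin.castSucc : Fin n → Fin (n + 1)) with hHmdef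
      have hrelm : ∀ x y : Fin n, Hm.Adj x y ↔ H.Adj x.castSucc y.castSucc := by
        intro x y; rw [hHmdef, SimpleGraph.comap_adj]
      by_cases hvC : Fin.last n ∈ C
      · -- ===================== case last ∈ C =====================
        have hCt : C.erase (Fin.last n) ⊆ t := by
          intro a ha
          obtain ⟨hane, haC⟩ := Finset.mem_erase.mp ha
          exact (htchar a).mp (hclq a haC _ hvC hane)
        have hCeq : C.erase (Fin.last n) = t := by
          apply Finset.eq_of_subset_of_card_le hCt
          rw [htcard, Finset.card_erase_of_mem hvC, hcard]
          omega
        have htmemC : ∀ x ∈ t, x ∈ C := by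
          intro x hx
          rw [← hCeq] at hx
          exact (Finset.mem_erase.mp hx).2
        obtain ⟨tm, htimg, htmcard, htmmem⟩ := down_finset t htlt
        have htmcard' : tm.card = k := by rw [htmcard, htcard]
        have htmclq : ∀ a ∈ tm, ∀ b ∈ tm, a ≠ b → Hm.Adj a b := by
          intro a ha b hb hab
          rw [hrelm]
          exact htclq _ ((htmmem a).mpr ha) _ ((htmmem b).mpr hb)
            (fun hc => hab (Fin.castSucc_injective _ hc))
        obtain ⟨w, hw1, hw2⟩ := extend_clique hn Hm hHm tm htmcard' htmclq
        set Cm : Finset (Fin n) := insert w tm with hCmdef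
        have hCmcard : Cm.card = k + 1 := by
          rw [hCmdef, Finset.card_insert_of_notMem hw1, htmcard']
        have hCmclq : ∀ a ∈ Cm, ∀ b ∈ Cm, a ≠ b → Hm.Adj a b := by
          intro a ha b hb hab
          rw [hCmdef, Finset.mem_insert] at ha hb
          rcases ha with rfl | ha <;> rcases hb with rfl | hb
          · exact absurd rfl hab
          · exact hw2 b hb
          · exact (hw2 a ha).symm
          · exact htmclq a ha b hb hab
        obtain ⟨Km, em, hKm, hrelKm, hposm⟩ := IH Hm hHm Cm hCmcard hCmclq
        set p := em w with hp
        have hpval : p.val < k + 1 := hposm w (Finset.mem_insert_self _ _)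
        have hkn1 : k + 1 < n + 1 := by omega
        set g : Fin n → Fin (n + 1) := fun q =>
          if q = p then ⟨k + 1, hkn1⟩
          else if q.val < k + 1 then q.castSucc else q.succ with hgdef
        have hgval : ∀ q, (g q).val =
            if q = p then k + 1 else if q.val < k + 1 then q.val else q.val + 1 := by
          intro q
          simp only [hgdef]
          split_ifs with h1 h2 <;> simp
        have hginj : Function.Injective g := by
          intro a b hab
          have h := congrArg Fin.val hab
          rw [hgval a, hgval b] at h
          by_cases h1 : a = p <;> by_cases h2 : b = p
          · rw [h1, h2]
          · exfalso; rw [if_pos h1, if_neg h2] at h; split_ifs at h <;> omega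
          · exfalso; rw [if_neg h1, if_pos h2] at h; split_ifs at h <;> omega
          · rw [if_neg h1, if_neg h2] at h; apply Fin.ext; split_ifs at h <;> omega
        set e' : Fin (n + 1) → Fin (n + 1) :=
          Fin.lastCases p.castSucc (fun x => g (em x)) with he'def
        have he'last : e' (Fin.last n) = p.castSucc := by rw [he'def]; simp
        have he'cast : ∀ x : Fin n, e' x.castSucc = g (em x) := by
          intro x; rw [he'def]; simp
        have hgne_cast : ∀ q, g q ≠ p.castSucc := by
          intro q hc
          have h := congrArg Fin.val hc
          rw [hgval q, Fin.coe_castSucc] at h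
          split_ifs at h with hq1 hq2
          · omega
          · exact hq1 (Fin.ext h)
          · omega
        have he'inj : Function.Injective e' := by
          intro a b hab
          rcases fin_last_or_cast a with rfl | ⟨x, rfl⟩ <;>
            rcases fin_last_or_cast b with rfl | ⟨y, rfl⟩
          · rfl
          · rw [he'last, he'cast] at hab; exact absurd hab.symm (hgne_cast _)
          · rw [he'last, he'cast] at hab; exact absurd hab (hgne_cast _)
          · rw [he'cast, he'cast] at hab
            rw [em.injective (hginj hab)]
        set e : Fin (n + 1) ≃ Fin (n + 1) :=
          Equiv.ofBijective e' (Finite.injective_iff_bijective.mp he'inj) with hedef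
        have heapp : ∀ x, e x = e' x := fun x => rfl
        set K := H.comap ⇑e.symm with hKdef
        have hrelK : ∀ u v, H.Adj u v ↔ K.Adj (e u) (e v) := by
          intro u v
          rw [hKdef, SimpleGraph.comap_adj, e.symm_apply_apply, e.symm_apply_apply]
        have hsur : ∀ x : Fin n, (em x).val < k + 1 → x ∈ Cm := by
          have himgsub : Cm.image em ⊆
              Finset.univ.filter (fun q : Fin n => q.val < k + 1) := by
            intro q hq
            obtain ⟨c, hc, rfl⟩ := Finset.mem_image.mp hq
            simp only [Finset.mem_filter, Finset.mem_univ, true_and]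
            exact hposm c hc
          have heq2 : Cm.image em = Finset.univ.filter (fun q : Fin n => q.val < k + 1) := by
            apply Finset.eq_of_subset_of_card_le himgsub
            rw [card_small hn, Finset.card_image_of_injective _ em.injective, hCmcard]
          intro x hx
          have hmem : em x ∈ Cm.image em := by
            rw [heq2]
            simp only [Finset.mem_filter, Finset.mem_univ, true_and]
            exact hx
          obtain ⟨c, hc, hceq⟩ := Finset.mem_image.mp hmem
          rwa [← em.injective hceq]
        have hE1 : ∀ u : Fin (n + 1), (e u).val < k + 1 →
            u = Fin.last n ∨ ∃ x : Fin n, u = x.castSucc ∧ x ∈ tm := by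
          intro u hu
          rcases fin_last_or_cast u with rfl | ⟨x, rfl⟩
          · exact Or.inl rfl
          · right
            rw [heapp, he'cast, hgval] at hu
            split_ifs at hu with hq1 hq2
            · omega
            · have hx : x ∈ Cm := hsur x hq2
              rw [hCmdef, Finset.mem_insert] at hx
              rcases hx with rfl | hx
              · exact absurd hp.symm hq1
              · exact ⟨x, rfl, hx⟩
            · omega
        have hAdjlast : ∀ x : Fin n, x ∈ tm → H.Adj (Fin.last n) x.castSucc := by
          intro x hx
          exact ((htchar _).mpr ((htmmem x).mpr hx)).symm
        have hcond2 : ∀ i j : Fin (n + 1), i.val < k + 1 → j.val < k + 1 → i ≠ j →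
            K.Adj i j := by
          intro i j hi hj hij
          have hiu : i = e (e.symm i) := (e.apply_symm_apply i).symm
          have hju : j = e (e.symm j) := (e.apply_symm_apply j).symm
          have hne : e.symm i ≠ e.symm j := fun hc => hij (by rw [hiu, hju, hc])
          have h1 := hE1 (e.symm i) (by rw [e.apply_symm_apply]; exact hi)
          have h2 := hE1 (e.symm j) (by rw [e.apply_symm_apply]; exact hj)
          rw [hiu, hju, ← hrelK]
          rcases h1 with h1 | ⟨x, hx, hxt⟩ <;> rcases h2 with h2 | ⟨y, hy, hyt⟩
          · exact absurd (h1.trans h2.symm) hne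
          · rw [h1, hy]; exact hAdjlast y hyt
          · rw [hx, h2]; exact (hAdjlast x hxt).symm
          · rw [hx, hy]
            refine htclq _ ((htmmem x).mpr hxt) _ ((htmmem y).mpr hyt) ?_
            intro hc
            exact hne (by rw [hx, hy, hc])
        have hcond3 : ∀ j' : Fin (n + 1), k + 1 ≤ j'.val →
            ∃ s : Finset (Fin (n + 1)), s.card = k ∧ (∀ i ∈ s, i < j') ∧
              (∀ i : Fin (n + 1), i < j' → (K.Adj i j' ↔ i ∈ s)) ∧
              (∀ a ∈ s, ∀ b ∈ s, a ≠ b → K.Adj a b) := by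
          intro j' hj'
          have hju : j' = e (e.symm j') := (e.apply_symm_apply j').symm
          rcases fin_last_or_cast (e.symm j') with hA | ⟨x, hB⟩
          · exfalso
            have hple : j' = p.castSucc := by rw [hju, hA, heapp, he'last]
            rw [hple] at hj'
            simp only [Fin.coe_castSucc] at hj'
            omega
          · have hj'g : j' = g (em x) := by rw [hju, hB, heapp, he'cast]
            have hj'e : j' = e x.castSucc := by rw [hju, hB]
            by_cases hq1 : em x = p
            · -- j' is the vertex w at position k+1
              have hxw : x = w := em.injective (by rw [hq1, hp])
              have hinjE : Function.Injective (fun a : Fin n => e a.castSucc) :=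
                fun a b h => Fin.castSucc_injective _ (e.injective h)
              refine ⟨tm.image (fun a => e a.castSucc), ?_, ?_, ?_, ?_⟩
              · rw [Finset.card_image_of_injective _ hinjE, htmcard']
              · intro i hi
                obtain ⟨a, ha, rfl⟩ := Finset.mem_image.mp hi
                have haCm : a ∈ Cm := by rw [hCmdef]; exact Finset.mem_insert_of_mem ha
                have hsmalla : (em a).val < k + 1 := hposm a haCm
                have hanep : em a ≠ p := by
                  intro hc
                  have haw : a = w := em.injective (by rw [hc, hp])
                  exact hw1 (haw ▸ ha)
                rw [Fin.lt_def]
                have hval : (e a.castSucc).val = (em a).val := by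
                  rw [heapp, he'cast, hgval, if_neg hanep, if_pos hsmalla]
                rw [hval, hj'g, hgval, if_pos hq1]
                exact hsmalla
              · intro i hij
                have hival : i.val < k + 1 := by
                  have h' : i.val < j'.val := hij
                  rw [hj'g, hgval, if_pos hq1] at h'
                  omega
                have hiu : i = e (e.symm i) := (e.apply_symm_apply i).symm
                rcases hE1 (e.symm i) (by rw [e.apply_symm_apply]; exact hival)
                  with h1 | ⟨y, hy, hyt⟩
                · constructor
                  · intro hadj
                    exfalso
                    rw [hiu, h1, hj'e, ← hrelK] at hadj
                    have hmem : x.castSucc ∈ t := (htchar _).mp hadj.symm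
                    have hxtm := (htmmem x).mp hmem
                    rw [hxw] at hxtm
                    exact hw1 hxtm
                  · intro hmem
                    exfalso
                    obtain ⟨a, ha, haeq⟩ := Finset.mem_image.mp hmem
                    have heqq : e a.castSucc = e (Fin.last n) := by
                      rw [haeq, hiu, h1]
                    have := e.injective heqq
                    exact absurd this (Fin.ne_of_lt (Fin.castSucc_lt_last a))
                · constructor
                  · intro _
                    refine Finset.mem_image.mpr ⟨y, hyt, ?_⟩
                    rw [hiu, hy]
                  · intro _
                    rw [hiu, hy, hj'e, ← hrelK]
                    have hadj2 := (hw2 y hyt).symm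
                    rwa [hrelm, ← hxw] at hadj2
              · intro a ha b hb hab
                obtain ⟨a', ha', rfl⟩ := Finset.mem_image.mp ha
                obtain ⟨b', hb', rfl⟩ := Finset.mem_image.mp hb
                show K.Adj (e a'.castSucc) (e b'.castSucc)
                rw [← hrelK]
                refine htclq _ ((htmmem a').mpr ha') _ ((htmmem b').mpr hb') ?_
                intro hc
                exact hab (by simp only [hc])
            · by_cases hq2 : (em x).val < k + 1
              · exfalso
                have h' : j'.val < k + 1 := by
                  rw [hj'g, hgval, if_neg hq1, if_pos hq2]
                  exact hq2
                omega
              · push_neg at hq2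
                have hj'val : j'.val = (em x).val + 1 := by
                  rw [hj'g, hgval, if_neg hq1, if_neg (not_lt.mpr hq2)]
                obtain ⟨t', ht'card, ht'lt, ht'char, ht'clq⟩ := hKm.2.2 (em x) hq2
                refine ⟨t'.image g, ?_, ?_, ?_, ?_⟩
                · rw [Finset.card_image_of_injective _ hginj, ht'card]
                · intro i hi
                  obtain ⟨i₀, hi₀, rfl⟩ := Finset.mem_image.mp hi
                  have hltv : i₀.val < (em x).val := ht'lt i₀ hi₀
                  rw [Fin.lt_def, hj'val, hgval]
                  split_ifs <;> omega
                · intro i hij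
                  have hiu : i = e (e.symm i) := (e.apply_symm_apply i).symm
                  rcases fin_last_or_cast (e.symm i) with h1 | ⟨y, hy⟩
                  · have hieq : i = p.castSucc := by rw [hiu, h1, heapp, he'last]
                    constructor
                    · intro hadj
                      exfalso
                      rw [hiu, h1, hj'e, ← hrelK] at hadj
                      have hmem : x.castSucc ∈ t := (htchar _).mp hadj.symm
                      have hxtm : x ∈ tm := (htmmem x).mp hmem
                      have hxCm : x ∈ Cm := by
                        rw [hCmdef]; exact Finset.mem_insert_of_mem hxtm
                      have := hposm x hxCm
                      omega
                    · intro hmem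
                      exfalso
                      obtain ⟨i₀, hi₀, hieq2⟩ := Finset.mem_image.mp hmem
                      exact hgne_cast i₀ (hieq2.trans hieq)
                  · have hieq : i = g (em y) := by rw [hiu, hy, heapp, he'cast]
                    have hq₀lt : em y < em x := by
                      have hiv : i.val < j'.val := hij
                      rw [hieq, hj'val, hgval] at hiv
                      rw [Fin.lt_def]
                      split_ifs at hiv <;> omega
                    have hchain : K.Adj i j' ↔ Km.Adj (em y) (em x) := by
                      rw [hiu, hy, hj'e, ← hrelK, ← hrelm]
                      exact hrelKm y x
                    refine hchain.trans ((ht'char _ hq₀lt).trans ?_)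
                    constructor
                    · intro hmem
                      rw [hieq]
                      exact Finset.mem_image_of_mem g hmem
                    · intro hmem
                      obtain ⟨i₀, hi₀, heq⟩ := Finset.mem_image.mp hmem
                      rw [hieq] at heq
                      rwa [← hginj heq]
                · intro a ha b hb hab
                  obtain ⟨a₀, ha₀, rfl⟩ := Finset.mem_image.mp ha
                  obtain ⟨b₀, hb₀, rfl⟩ := Finset.mem_image.mp hb
                  have hne2 : a₀ ≠ b₀ := fun hc => hab (by rw [hc])
                  have hKmadj := ht'clq a₀ ha₀ b₀ hb₀ hne2
                  have hga : g a₀ = e (em.symm a₀).castSucc := by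
                    rw [heapp, he'cast, em.apply_symm_apply]
                  have hgb : g b₀ = e (em.symm b₀).castSucc := by
                    rw [heapp, he'cast, em.apply_symm_apply]
                  rw [hga, hgb, ← hrelK, ← hrelm]
                  have h2 := hrelKm (em.symm a₀) (em.symm b₀)
                  rw [em.apply_symm_apply, em.apply_symm_apply] at h2
                  exact h2.mpr hKmadj
        refine ⟨K, e, ⟨by omega, hcond2, hcond3⟩, hrelK, ?_⟩
        intro c hc
        by_cases hcl : c = Fin.last n
        · rw [hcl, heapp, he'last]
          simpa using hpval
        · have hct : c ∈ t := by
            rw [← hCeq]; exact Finset.mem_erase.mpr ⟨hcl, hc⟩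
          have hcn : c.val < n := htlt c hct
          have hceq : c = (⟨c.val, hcn⟩ : Fin n).castSucc := by apply Fin.ext; simp
          have hctm : (⟨c.val, hcn⟩ : Fin n) ∈ tm := by
            apply (htmmem _).mp
            rw [← hceq]; exact hct
          have hcCm : (⟨c.val, hcn⟩ : Fin n) ∈ Cm := by
            rw [hCmdef]; exact Finset.mem_insert_of_mem hctm
          have hsm : (em (⟨c.val, hcn⟩ : Fin n)).val < k + 1 := hposm _ hcCm
          have hnep : em (⟨c.val, hcn⟩ : Fin n) ≠ p := by
            intro hcp
            have hcw : (⟨c.val, hcn⟩ : Fin n) = w := em.injective (by rw [hcp, hp])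
            exact hw1 (hcw ▸ hctm)
          rw [hceq, heapp, he'cast, hgval, if_neg hnep, if_pos hsm]
          exact hsm
      · -- ===================== case last ∉ C =====================
        have hClt : ∀ x ∈ C, x.val < n := by
          intro x hx
          have hne : x ≠ Fin.last n := fun hc => hvC (hc ▸ hx)
          have h1 := x.isLt
          have h2 : x.val ≠ n := fun hc => hne (Fin.ext (by simp [hc]))
          omega
        obtain ⟨Cm, hCimg, hCmcard0, hCmmem⟩ := down_finset C hClt
        have hCmcard : Cm.card = k + 1 := by rw [hCmcard0, hcard]
        have hCmclq : ∀ a ∈ Cm, ∀ b ∈ Cm, a ≠ b → Hm.Adj a b := by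
          intro a ha b hb hab
          rw [hrelm]
          exact hclq _ ((hCmmem a).mpr ha) _ ((hCmmem b).mpr hb)
            (fun hc => hab (Fin.castSucc_injective _ hc))
        obtain ⟨Km, em, hKm, hrelKm, hposm⟩ := IH Hm hHm Cm hCmcard hCmclq
        set e' : Fin (n + 1) → Fin (n + 1) :=
          Fin.lastCases (Fin.last n) (fun x => (em x).castSucc) with he'def
        have he'last : e' (Fin.last n) = Fin.last n := by rw [he'def]; simp
        have he'cast : ∀ x : Fin n, e' x.castSucc = (em x).castSucc := by
          intro x; rw [he'def]; simp
        have he'inj : Function.Injective e' := by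
          intro a b hab
          rcases fin_last_or_cast a with rfl | ⟨x, rfl⟩ <;>
            rcases fin_last_or_cast b with rfl | ⟨y, rfl⟩
          · rfl
          · rw [he'last, he'cast] at hab
            exact absurd hab.symm (Fin.ne_of_lt (Fin.castSucc_lt_last _))
          · rw [he'last, he'cast] at hab
            exact absurd hab (Fin.ne_of_lt (Fin.castSucc_lt_last _))
          · rw [he'cast, he'cast] at hab
            rw [em.injective (Fin.castSucc_injective _ hab)]
        set e : Fin (n + 1) ≃ Fin (n + 1) :=
          Equiv.ofBijective e' (Finite.injective_iff_bijective.mp he'inj) with hedef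
        have heapp : ∀ x, e x = e' x := fun x => rfl
        set K := H.comap ⇑e.symm with hKdef
        have hrelK : ∀ u v, H.Adj u v ↔ K.Adj (e u) (e v) := by
          intro u v
          rw [hKdef, SimpleGraph.comap_adj, e.symm_apply_apply, e.symm_apply_apply]
        have hE1 : ∀ u : Fin (n + 1), (e u).val < k + 1 →
            ∃ x : Fin n, u = x.castSucc ∧ (em x).val < k + 1 := by
          intro u hu
          rcases fin_last_or_cast u with rfl | ⟨x, rfl⟩
          · rw [heapp, he'last] at hu
            simp only [Fin.val_last] at hu
            omega
          · rw [heapp, he'cast] at hu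
            simp only [Fin.coe_castSucc] at hu
            exact ⟨x, rfl, hu⟩
        have hcond2 : ∀ i j : Fin (n + 1), i.val < k + 1 → j.val < k + 1 → i ≠ j →
            K.Adj i j := by
          intro i j hi hj hij
          have hiu : i = e (e.symm i) := (e.apply_symm_apply i).symm
          have hju : j = e (e.symm j) := (e.apply_symm_apply j).symm
          obtain ⟨x, hx, hxv⟩ := hE1 (e.symm i) (by rw [e.apply_symm_apply]; exact hi)
          obtain ⟨y, hy, hyv⟩ := hE1 (e.symm j) (by rw [e.apply_symm_apply]; exact hj)
          rw [hiu, hju, ← hrelK, hx, hy, ← hrelm]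
          refine (hrelKm x y).mpr ?_
          refine hKm.2.1 _ _ hxv hyv ?_
          intro hc
          apply hij
          rw [hiu, hju, hx, hy, em.injective hc]
        have hcond3 : ∀ j' : Fin (n + 1), k + 1 ≤ j'.val →
            ∃ s : Finset (Fin (n + 1)), s.card = k ∧ (∀ i ∈ s, i < j') ∧
              (∀ i : Fin (n + 1), i < j' → (K.Adj i j' ↔ i ∈ s)) ∧
              (∀ a ∈ s, ∀ b ∈ s, a ≠ b → K.Adj a b) := by
          intro j' hj'
          have hju : j' = e (e.symm j') := (e.apply_symm_apply j').symm
          rcases fin_last_or_cast (e.symm j') with hA | ⟨x, hB⟩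
          · -- j' = last
            have hj'last : j' = Fin.last n := by rw [hju, hA, heapp, he'last]
            obtain ⟨t2m, htimg2, htmcard2, htmmem2⟩ := down_finset t htlt
            have hinjE : Function.Injective (fun a : Fin n => e a.castSucc) :=
              fun a b h => Fin.castSucc_injective _ (e.injective h)
            have hlastfix : (Fin.last n) = e (Fin.last n) := by rw [heapp, he'last]
            refine ⟨t2m.image (fun a => e a.castSucc), ?_, ?_, ?_, ?_⟩
            · rw [Finset.card_image_of_injective _ hinjE, htmcard2, htcard]
            · intro i hi
              obtain ⟨a, ha, rfl⟩ := Finset.mem_image.mp hi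
              rw [hj'last]
              have hcv : e a.castSucc = (em a).castSucc := by rw [heapp, he'cast]
              rw [hcv]
              exact Fin.castSucc_lt_last _
            · intro i hij
              have hine : i ≠ Fin.last n := Fin.ne_of_lt (by rw [← hj'last]; exact hij)
              have hiu : i = e (e.symm i) := (e.apply_symm_apply i).symm
              rcases fin_last_or_cast (e.symm i) with h1 | ⟨y, hy⟩
              · exfalso; apply hine; rw [hiu, h1, heapp, he'last]
              · have hchain : K.Adj i j' ↔ y.castSucc ∈ t := by
                  rw [hiu, hy, hj'last, hlastfix, ← hrelK]
                  exact htchar _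
                refine hchain.trans ?_
                constructor
                · intro hmem
                  refine Finset.mem_image.mpr ⟨y, (htmmem2 y).mp hmem, ?_⟩
                  rw [hiu, hy]
                · intro hmem
                  obtain ⟨a, ha, haeq⟩ := Finset.mem_image.mp hmem
                  have hay : a = y := by
                    apply hinjE
                    show e a.castSucc = e y.castSucc
                    rw [haeq, hiu, hy]
                  exact hay ▸ ((htmmem2 a).mpr ha)
            · intro a ha b hb hab
              obtain ⟨a', ha', rfl⟩ := Finset.mem_image.mp ha
              obtain ⟨b', hb', rfl⟩ := Finset.mem_image.mp hb
              show K.Adj (e a'.castSucc) (e b'.castSucc)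
              rw [← hrelK]
              refine htclq _ ((htmmem2 a').mpr ha') _ ((htmmem2 b').mpr hb') ?_
              intro hc
              exact hab (by rw [hc])
          · -- j' = (em x).castSucc with (em x).val ≥ k+1
            have hj'eq : j' = (em x).castSucc := by rw [hju, hB, heapp, he'cast]
            have hj'e : j' = e x.castSucc := by rw [hju, hB]
            have hqval : k + 1 ≤ (em x).val := by
              rw [hj'eq] at hj'
              simpa using hj'
            obtain ⟨t', ht'card, ht'lt, ht'char, ht'clq⟩ := hKm.2.2 (em x) hqval
            refine ⟨t'.image Fin.castSucc, ?_, ?_, ?_, ?_⟩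
            · rw [Finset.card_image_of_injective _ (Fin.castSucc_injective n), ht'card]
            · intro i hi
              obtain ⟨i₀, hi₀, rfl⟩ := Finset.mem_image.mp hi
              rw [hj'eq]
              exact Fin.castSucc_lt_castSucc_iff.mpr (ht'lt i₀ hi₀)
            · intro i hij
              have hival : i.val < n := by
                have h1 : i.val < j'.val := hij
                have h2 : j'.val = (em x).val := by rw [hj'eq, Fin.coe_castSucc]
                have h3 := (em x).isLt
                omega
              have hine : i ≠ Fin.last n := by
                intro hc
                rw [hc] at hival
                simp at hival
              have hiu : i = e (e.symm i) := (e.apply_symm_apply i).symm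
              rcases fin_last_or_cast (e.symm i) with h1 | ⟨y, hy⟩
              · exfalso; apply hine; rw [hiu, h1, heapp, he'last]
              · have hieq : i = (em y).castSucc := by rw [hiu, hy, heapp, he'cast]
                have hlt2 : em y < em x := by
                  rw [Fin.lt_def]
                  have h1 : i.val < j'.val := hij
                  rw [hieq, hj'eq] at h1
                  simpa using h1
                have hchain : K.Adj i j' ↔ Km.Adj (em y) (em x) := by
                  rw [hiu, hy, hj'e, ← hrelK, ← hrelm]
                  exact hrelKm y x
                refine hchain.trans ((ht'char _ hlt2).trans ?_)
                constructor
                · intro hmem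
                  refine Finset.mem_image.mpr ⟨_, hmem, ?_⟩
                  rw [hieq]
                · intro hmem
                  obtain ⟨i₀, hi₀, heq⟩ := Finset.mem_image.mp hmem
                  have hi₀y : i₀ = em y := by
                    apply Fin.castSucc_injective
                    rw [heq, hieq]
                  rwa [← hi₀y]
            · intro a ha b hb hab
              obtain ⟨a₀, ha₀, rfl⟩ := Finset.mem_image.mp ha
              obtain ⟨b₀, hb₀, rfl⟩ := Finset.mem_image.mp hb
              have hne2 : a₀ ≠ b₀ := fun hc => hab (by rw [hc])
              have hKmadj := ht'clq a₀ ha₀ b₀ hb₀ hne2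
              have hga : a₀.castSucc = e (em.symm a₀).castSucc := by
                rw [heapp, he'cast, em.apply_symm_apply]
              have hgb : b₀.castSucc = e (em.symm b₀).castSucc := by
                rw [heapp, he'cast, em.apply_symm_apply]
              rw [hga, hgb, ← hrelK, ← hrelm]
              have h2 := hrelKm (em.symm a₀) (em.symm b₀)
              rw [em.apply_symm_apply, em.apply_symm_apply] at h2
              exact h2.mpr hKmadj
        refine ⟨K, e, ⟨by omega, hcond2, hcond3⟩, hrelK, ?_⟩
        intro c hc
        have hcn : c.val < n := hClt c hc
        have hceq : c = (⟨c.val, hcn⟩ : Fin n).castSucc := by apply Fin.ext; simp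
        have hcCm : (⟨c.val, hcn⟩ : Fin n) ∈ Cm := by
          apply (hCmmem _).mp
          rw [← hceq]; exact hc
        rw [hceq, heapp, he'cast]
        simpa using hposm _ hcCm

end Reroot

section GlueRooted

lemma glue_rooted {k : ℕ} {V₁ V₂ : Type} (G₁ : SimpleGraph V₁) (G₂ : SimpleGraph V₂)
    (r₁ : Fin (k + 1) → V₁) (r₂ : Fin (k + 1) → V₂)
    (h₁ : IsRootedPartialKTree k G₁ r₁) (h₂ : IsRootedPartialKTree k G₂ r₂) :
    IsRootedPartialKTree k (glue G₁ G₂ r₁ r₂) (glueRoot r₁ r₂) := by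
  classical
  obtain ⟨n₁, H₁, hkt₁, f₁, hom₁, hroots₁⟩ := h₁
  obtain ⟨n₂, H₂, hkt₂, f₂, hom₂, hroots₂⟩ := h₂
  have hn₁ : k + 1 ≤ n₁ := hkt₁.1
  have hn₂ : k + 1 ≤ n₂ := hkt₂.1
  -- injectivity of root maps
  have hr₁inj : Function.Injective r₁ := by
    intro i j hij
    by_contra hne
    exact (hroots₁ i j (fun hc => hne (hc ▸ rfl))).ne (by rw [hij])
  have hr₂inj : Function.Injective r₂ := by
    intro i j hij
    by_contra hne
    exact (hroots₂ i j (fun hc => hne (hc ▸ rfl))).ne (by rw [hij])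
  -- step 1: reroot H₂ so that the images of the roots are the first k+1 vertices
  set C₂ : Finset (Fin n₂) := Finset.univ.image (fun i => f₂ (r₂ i)) with hC₂def
  have hC₂card : C₂.card = k + 1 := by
    have hinj : Function.Injective (fun i : Fin (k + 1) => f₂ (r₂ i)) :=
      fun a b h => hr₂inj (f₂.injective h)
    rw [hC₂def, Finset.card_image_of_injective _ hinj]
    simp
  have hC₂clq : ∀ a ∈ C₂, ∀ b ∈ C₂, a ≠ b → H₂.Adj a b := by
    intro a ha b hb hab
    obtain ⟨i, -, rfl⟩ := Finset.mem_image.mp ha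
    obtain ⟨j, -, rfl⟩ := Finset.mem_image.mp hb
    exact hroots₂ i j (fun hc => hab (by rw [hc]))
  obtain ⟨K₂, e₂, hK₂, hrel₂, hpos₂⟩ := reroot hn₂ H₂ hkt₂ C₂ hC₂card hC₂clq
  have hρpos : ∀ i : Fin (k + 1), (e₂ (f₂ (r₂ i))).val < k + 1 := by
    intro i
    apply hpos₂
    rw [hC₂def]
    exact Finset.mem_image_of_mem _ (Finset.mem_univ i)
  set ρ' : Fin (k + 1) → Fin (k + 1) := fun i => ⟨(e₂ (f₂ (r₂ i))).val, hρpos i⟩ with hρ'def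
  have hρ'inj : Function.Injective ρ' := by
    intro i j hij
    have h := congrArg Fin.val hij
    simp only [hρ'def] at h
    exact hr₂inj (f₂.injective (e₂.injective (Fin.ext h)))
  set π : Fin (k + 1) ≃ Fin (k + 1) :=
    Equiv.ofBijective ρ' (Finite.injective_iff_bijective.mp hρ'inj) with hπdef
  have hπapp : ∀ i, π i = ρ' i := fun _ => rfl
  set τ' : Fin n₂ → Fin n₂ := fun x =>
    if h : x.val < k + 1 then ⟨(π.symm ⟨x.val, h⟩).val, by omega⟩ else x with hτ'def
  have hτ'small : ∀ x (h : x.val < k + 1), τ' x = ⟨(π.symm ⟨x.val, h⟩).val, by omega⟩ := by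
    intro x h
    simp only [hτ'def, dif_pos h]
  have hτ'big : ∀ x, k + 1 ≤ x.val → τ' x = x := by
    intro x h
    simp only [hτ'def, dif_neg (by omega : ¬ x.val < k + 1)]
  have hτ'inj : Function.Injective τ' := by
    intro a b hab
    by_cases ha : a.val < k + 1 <;> by_cases hb : b.val < k + 1
    · rw [hτ'small a ha, hτ'small b hb] at hab
      have h := congrArg Fin.val hab
      simp only at h
      have h2 : (⟨a.val, ha⟩ : Fin (k + 1)) = ⟨b.val, hb⟩ := π.symm.injective (Fin.ext h)
      have h3 := congrArg Fin.val h2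
      exact Fin.ext h3
    · exfalso
      rw [hτ'small a ha, hτ'big b (by omega)] at hab
      have h := congrArg Fin.val hab
      simp only at h
      have := (π.symm ⟨a.val, ha⟩).isLt
      omega
    · exfalso
      rw [hτ'big a (by omega), hτ'small b hb] at hab
      have h := congrArg Fin.val hab
      simp only at h
      have := (π.symm ⟨b.val, hb⟩).isLt
      omega
    · rw [hτ'big a (by omega), hτ'big b (by omega)] at hab
      exact hab
  set τ : Fin n₂ ≃ Fin n₂ :=
    Equiv.ofBijective τ' (Finite.injective_iff_bijective.mp hτ'inj) with hτdef
  have hτapp : ∀ x, τ x = τ' x := fun _ => rfl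
  obtain ⟨K₂', hK₂', hrelτ⟩ := perm_first K₂ hK₂ τ (by
    intro x hx
    rw [hτapp]
    exact hτ'big x hx)
  set g₂f : V₂ → Fin n₂ := fun v => τ (e₂ (f₂ v)) with hg₂def
  have hg₂inj : Function.Injective g₂f := by
    intro a b hab
    exact f₂.injective (e₂.injective (τ.injective hab))
  have hg₂root : ∀ i : Fin (k + 1), g₂f (r₂ i) = ⟨i.val, by omega⟩ := by
    intro i
    rw [hg₂def]
    simp only
    rw [hτapp, hτ'small _ (hρpos i)]
    apply Fin.ext
    simp only
    have hfix : (⟨(e₂ (f₂ (r₂ i))).val, hρpos i⟩ : Fin (k + 1)) = π i := by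
      rw [hπapp]
    rw [hfix, π.symm_apply_apply]
  have hg₂small : ∀ v : V₂, (g₂f v).val < k + 1 →
      ∃ i : Fin (k + 1), v = r₂ i ∧ (g₂f v).val = i.val := by
    intro v hv
    set i : Fin (k + 1) := ⟨(g₂f v).val, hv⟩ with hidef
    have heq : g₂f (r₂ i) = g₂f v := by
      rw [hg₂root i]
    exact ⟨i, (hg₂inj heq).symm, rfl⟩
  have hhom₂ : ∀ u v, G₂.Adj u v → K₂'.Adj (g₂f u) (g₂f v) := by
    intro u v huv
    rw [hg₂def]
    simp only
    rw [← hrelτ, ← hrel₂]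
    exact hom₂ u v huv
  -- step 2: build the combined k-tree
  set N := n₁ + (n₂ - (k + 1)) with hNdef
  have hn₁N : n₁ ≤ N := by omega
  set inj₁ : Fin n₁ → Fin N := fun x => ⟨x.val, by omega⟩ with hinj₁def
  have hinj₁inj : Function.Injective inj₁ := by
    intro a b hab
    have h := congrArg Fin.val hab
    exact Fin.ext h
  set J : Fin n₂ → Fin N := fun x =>
    if h : x.val < k + 1 then ⟨(f₁ (r₁ ⟨x.val, h⟩)).val, by
      have := (f₁ (r₁ ⟨x.val, h⟩)).isLt; omega⟩
    else ⟨n₁ + x.val - (k + 1), by have := x.isLt; omega⟩ with hJdef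
  have hJsmall : ∀ (x : Fin n₂) (h : x.val < k + 1),
      J x = inj₁ (f₁ (r₁ ⟨x.val, h⟩)) := by
    intro x h
    simp only [hJdef, dif_pos h]
    rfl
  have hJbig : ∀ x : Fin n₂, k + 1 ≤ x.val → (J x).val = n₁ + x.val - (k + 1) := by
    intro x h
    simp only [hJdef, dif_neg (by omega : ¬ x.val < k + 1)]
  have hJbig' : ∀ x : Fin n₂, k + 1 ≤ x.val → n₁ ≤ (J x).val := by
    intro x h
    rw [hJbig x h]
    omega
  have hJsmallval : ∀ (x : Fin n₂) (h : x.val < k + 1), (J x).val < n₁ := by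
    intro x h
    rw [hJsmall x h, hinj₁def]
    simp only
    exact (f₁ (r₁ ⟨x.val, h⟩)).isLt
  have hJinj : Function.Injective J := by
    intro a b hab
    by_cases ha : a.val < k + 1 <;> by_cases hb : b.val < k + 1
    · rw [hJsmall a ha, hJsmall b hb] at hab
      have heq := hr₁inj (f₁.injective (hinj₁inj hab))
      have hval := congrArg Fin.val heq
      exact Fin.ext hval
    · exfalso
      have h1 := hJsmallval a ha
      have h2 := hJbig' b (by omega)
      rw [hab] at h1
      omega
    · exfalso
      have h1 := hJsmallval b hb
      have h2 := hJbig' a (by omega)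
      rw [← hab] at h1
      omega
    · have h1 := hJbig a (by omega)
      have h2 := hJbig b (by omega)
      have h := congrArg Fin.val hab
      rw [h1, h2] at h
      apply Fin.ext
      omega
  set R : Fin N → Fin N → Prop := fun a b =>
    (∃ x y : Fin n₁, H₁.Adj x y ∧ a = inj₁ x ∧ b = inj₁ y) ∨
    (∃ x y : Fin n₂, K₂'.Adj x y ∧ a = J x ∧ b = J y) with hRdef
  have hRsymm : ∀ a b, R a b → R b a := by
    rintro a b (⟨x, y, hxy, ha, hb⟩ | ⟨x, y, hxy, ha, hb⟩)
    · exact Or.inl ⟨y, x, hxy.symm, hb, ha⟩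
    · exact Or.inr ⟨y, x, hxy.symm, hb, ha⟩
  have hRne : ∀ a b, R a b → a ≠ b := by
    rintro a b (⟨x, y, hxy, rfl, rfl⟩ | ⟨x, y, hxy, rfl, rfl⟩)
    · exact fun hc => hxy.ne (hinj₁inj hc)
    · exact fun hc => hxy.ne (hJinj hc)
  set H : SimpleGraph (Fin N) := SimpleGraph.fromRel R with hHdef
  have hHadj : ∀ a b, H.Adj a b ↔ R a b := by
    intro a b
    rw [hHdef, SimpleGraph.fromRel_adj]
    constructor
    · rintro ⟨hne, h | h⟩
      · exact h
      · exact hRsymm b a h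
    · intro h
      exact ⟨hRne a b h, Or.inl h⟩
  -- H is a k-tree
  have hHkt : IsKTree k N H := by
    refine ⟨by omega, ?_, ?_⟩
    · intro i j hi hj hij
      rw [hHadj]
      left
      refine ⟨⟨i.val, by omega⟩, ⟨j.val, by omega⟩, ?_, Fin.ext rfl, Fin.ext rfl⟩
      refine hkt₁.2.1 _ _ (by simpa using hi) (by simpa using hj) ?_
      intro hc
      have hval := congrArg Fin.val hc
      exact hij (Fin.ext hval)
    · intro j hj
      by_cases hjn₁ : j.val < n₁
      · -- inside H₁
        set j₁ : Fin n₁ := ⟨j.val, hjn₁⟩ with hj₁def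
        obtain ⟨s, hscard, hslt, hschar, hsclq⟩ := hkt₁.2.2 j₁ (by simpa using hj)
        refine ⟨s.image inj₁, ?_, ?_, ?_, ?_⟩
        · rw [Finset.card_image_of_injective _ hinj₁inj, hscard]
        · intro i hi
          obtain ⟨a, ha, rfl⟩ := Finset.mem_image.mp hi
          have := hslt a ha
          rw [Fin.lt_def]
          exact this
        · intro i hij
          have hin₁ : i.val < n₁ := by
            have : i.val < j.val := hij
            omega
          set i₁ : Fin n₁ := ⟨i.val, hin₁⟩ with hi₁def
          have hieq : i = inj₁ i₁ := Fin.ext rfl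
          have hjeq : j = inj₁ j₁ := Fin.ext rfl
          have hH₁iff : H.Adj i j ↔ H₁.Adj i₁ j₁ := by
            rw [hHadj]
            constructor
            · rintro (⟨x, y, hxy, hxeq, hyeq⟩ | ⟨x, y, hxy, hxeq, hyeq⟩)
              · have hx : x = i₁ := by
                  apply hinj₁inj
                  rw [← hxeq, hieq]
                have hy : y = j₁ := by
                  apply hinj₁inj
                  rw [← hyeq, hjeq]
                rwa [hx, hy] at hxy
              · -- both endpoints small in K₂'
                have hysmall : y.val < k + 1 := by
                  by_contra hc
                  push_neg at hc
                  have := hJbig' y hc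
                  rw [← hyeq] at this
                  omega
                have hxsmall : x.val < k + 1 := by
                  by_contra hc
                  push_neg at hc
                  have := hJbig' x hc
                  rw [← hxeq] at this
                  omega
                have hxy_ne : x ≠ y := hxy.ne
                have hidx : (⟨x.val, hxsmall⟩ : Fin (k + 1)) ≠ ⟨y.val, hysmall⟩ := by
                  intro hc
                  have hval := congrArg Fin.val hc
                  exact hxy_ne (Fin.ext hval)
                have hadj := hroots₁ _ _ hidx
                have hxeq' : i₁ = f₁ (r₁ ⟨x.val, hxsmall⟩) := by
                  apply hinj₁inj
                  rw [← hieq, hxeq, hJsmall x hxsmall]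
                have hyeq' : j₁ = f₁ (r₁ ⟨y.val, hysmall⟩) := by
                  apply hinj₁inj
                  rw [← hjeq, hyeq, hJsmall y hysmall]
                rw [hxeq', hyeq']
                exact hadj
            · intro hadj
              exact Or.inl ⟨i₁, j₁, hadj, hieq, hjeq⟩
          rw [hH₁iff, hschar i₁ (by rw [Fin.lt_def]; exact hij)]
          constructor
          · intro hmem
            exact Finset.mem_image.mpr ⟨i₁, hmem, hieq.symm⟩
          · intro hmem
            obtain ⟨a, ha, haeq⟩ := Finset.mem_image.mp hmem
            have : a = i₁ := hinj₁inj (by rw [haeq, hieq])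
            rwa [← this]
        · intro a ha b hb hab
          obtain ⟨a', ha', rfl⟩ := Finset.mem_image.mp ha
          obtain ⟨b', hb', rfl⟩ := Finset.mem_image.mp hb
          rw [hHadj]
          left
          exact ⟨a', b', hsclq a' ha' b' hb' (fun hc => hab (by rw [hc])), rfl, rfl⟩
      · -- inside K₂'
        push_neg at hjn₁
        set y : Fin n₂ := ⟨j.val - n₁ + (k + 1), by omega⟩ with hydef
        have hybig : k + 1 ≤ y.val := by simp [hydef]
        have hJy : J y = j := by
          apply Fin.ext
          rw [hJbig y hybig]
          simp [hydef]
          omega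
        obtain ⟨t, htcard, htlt, htchar, htclq⟩ := hK₂'.2.2 y hybig
        refine ⟨t.image J, ?_, ?_, ?_, ?_⟩
        · rw [Finset.card_image_of_injective _ hJinj, htcard]
        · intro i hi
          obtain ⟨a, ha, rfl⟩ := Finset.mem_image.mp hi
          have halt : a.val < y.val := htlt a ha
          rw [Fin.lt_def, ← hJy]
          by_cases has : a.val < k + 1
          · have h1 := hJsmallval a has
            have h2 := hJbig y hybig
            omega
          · push_neg at has
            rw [hJbig a has, hJbig y hybig]
            omega
        · intro i hij
          have hchain : H.Adj i j ↔ ∃ x, K₂'.Adj x y ∧ J x = i := by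
            rw [hHadj]
            constructor
            · rintro (⟨x, y', hxy, hxeq, hyeq⟩ | ⟨x, y', hxy, hxeq, hyeq⟩)
              · exfalso
                have : j.val < n₁ := by
                  rw [hyeq, hinj₁def]
                  simp only
                  exact y'.isLt
                omega
              · have hy' : y' = y := by
                  apply hJinj
                  rw [hJy, ← hyeq]
                rw [hy'] at hxy
                exact ⟨x, hxy, hxeq.symm⟩
            · rintro ⟨x, hxy, hxeq⟩
              exact Or.inr ⟨x, y, hxy, hxeq.symm, hJy.symm⟩
          rw [hchain]
          constructor
          · rintro ⟨x, hxy, hxeq⟩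
            have hxlty : x < y := by
              rw [Fin.lt_def]
              by_cases hxs : x.val < k + 1
              · omega
              · push_neg at hxs
                have h1 := hJbig x hxs
                have h2 := hJbig y hybig
                have h3 : i.val < j.val := hij
                rw [← hxeq, ← hJy] at h3
                omega
            have := (htchar x hxlty).mp hxy
            exact Finset.mem_image.mpr ⟨x, this, hxeq⟩
          · intro hmem
            obtain ⟨x, hx, hxeq⟩ := Finset.mem_image.mp hmem
            exact ⟨x, (htchar x (htlt x hx)).mpr hx, hxeq⟩
        · intro a ha b hb hab
          obtain ⟨a', ha', rfl⟩ := Finset.mem_image.mp ha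
          obtain ⟨b', hb', rfl⟩ := Finset.mem_image.mp hb
          rw [hHadj]
          right
          exact ⟨a', b', htclq a' ha' b' hb' (fun hc => hab (by rw [hc])), rfl, rfl⟩
  -- step 3: the embedding of the glued graph
  set F0 : V₁ ⊕ V₂ → Fin N := Sum.elim (fun v => inj₁ (f₁ v)) (fun v => J (g₂f v)) with hF0def
  have hF0wd : ∀ x y : V₁ ⊕ V₂,
      (∃ i, x = Sum.inl (r₁ i) ∧ y = Sum.inr (r₂ i)) → F0 x = F0 y := by
    rintro x y ⟨i, rfl, rfl⟩
    simp only [hF0def, Sum.elim_inl, Sum.elim_inr]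
    rw [hg₂root i]
    rw [hJsmall _ (by simpa using i.isLt)]
  set F : GlueVerts r₁ r₂ → Fin N := Quot.lift F0 (fun x y h => hF0wd x y h) with hFdef
  have hFmk : ∀ a : V₁ ⊕ V₂, F (Quot.mk _ a) = F0 a := fun _ => rfl
  have hFinj : Function.Injective F := by
    intro x y hxy
    induction x using Quot.ind with | _ a =>
    induction y using Quot.ind with | _ b =>
    rw [hFmk, hFmk] at hxy
    rcases a with u | u <;> rcases b with v | v
    · simp only [hF0def, Sum.elim_inl] at hxy
      rw [f₁.injective (hinj₁inj hxy)]
    · -- inl u, inr v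
      simp only [hF0def, Sum.elim_inl, Sum.elim_inr] at hxy
      have hsmall : (g₂f v).val < k + 1 := by
        by_contra hc
        push_neg at hc
        have h1 := hJbig' (g₂f v) hc
        have h2 : (inj₁ (f₁ u)).val < n₁ := by
          rw [hinj₁def]; simp only; exact (f₁ u).isLt
        rw [← hxy] at h1
        omega
      obtain ⟨i, rfl, hival⟩ := hg₂small v hsmall
      have hJr : J (g₂f (r₂ i)) = inj₁ (f₁ (r₁ i)) := by
        rw [hg₂root i, hJsmall _ (by simpa using i.isLt)]
      rw [hJr] at hxy
      have : u = r₁ i := f₁.injective (hinj₁inj hxy)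
      rw [this]
      exact Quot.sound ⟨i, rfl, rfl⟩
    · -- inr u, inl v
      simp only [hF0def, Sum.elim_inl, Sum.elim_inr] at hxy
      have hsmall : (g₂f u).val < k + 1 := by
        by_contra hc
        push_neg at hc
        have h1 := hJbig' (g₂f u) hc
        have h2 : (inj₁ (f₁ v)).val < n₁ := by
          rw [hinj₁def]; simp only; exact (f₁ v).isLt
        rw [hxy] at h1
        omega
      obtain ⟨i, rfl, hival⟩ := hg₂small u hsmall
      have hJr : J (g₂f (r₂ i)) = inj₁ (f₁ (r₁ i)) := by
        rw [hg₂root i, hJsmall _ (by simpa using i.isLt)]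
      rw [hJr] at hxy
      have : r₁ i = v := f₁.injective (hinj₁inj hxy)
      rw [← this]
      exact (Quot.sound ⟨i, rfl, rfl⟩).symm
    · simp only [hF0def, Sum.elim_inr] at hxy
      rw [hg₂inj (hJinj hxy)]
  refine ⟨N, H, hHkt, ⟨F, hFinj⟩, ?_, ?_⟩
  · rintro x y ⟨hne, a, b, hab, rfl, rfl⟩
    show H.Adj (F0 a) (F0 b)
    rcases a with u | u <;> rcases b with v | v <;> simp only [sumAdj] at hab
    · rw [hHadj]
      exact Or.inl ⟨f₁ u, f₁ v, hom₁ u v hab, rfl, rfl⟩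
    · rw [hHadj]
      exact Or.inr ⟨g₂f u, g₂f v, hhom₂ u v hab, rfl, rfl⟩
  · intro i j hij
    show H.Adj (F0 (Sum.inl (r₁ i))) (F0 (Sum.inl (r₁ j)))
    rw [hHadj]
    exact Or.inl ⟨f₁ (r₁ i), f₁ (r₁ j), hroots₁ i j hij, rfl, rfl⟩

end GlueRooted


/-- Let `G¹` and `G²` be bipartite rooted partial `k`-trees with types `M¹`
and `M²` such that some bipartite type `M⁰` satisfies `M⁰ ⪯ M¹` and `M⁰ ⪯ M²`. Then `M¹` and
`M²` are compatible, `G¹ ⊕ G²` is a bipartite rooted partial `k`-tree, and its type `M`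
satisfies `M⁰ ⪯ M`. -/
theorem stmt7 (k : ℕ) (V₁ V₂ : Type) (G₁ : SimpleGraph V₁) (G₂ : SimpleGraph V₂)
    (r₁ : Fin (k + 1) → V₁) (r₂ : Fin (k + 1) → V₂)
    (h₁ : IsRootedPartialKTree k G₁ r₁) (hb₁ : G₁.Colorable 2)
    (h₂ : IsRootedPartialKTree k G₂ r₂) (hb₂ : G₂.Colorable 2)
    (M₀ : Fin (k + 1) → Fin (k + 1) → ℕ∞) (hM₀ : IsBipartiteType M₀)
    (hle₁ : TypeLE M₀ (typeOf G₁ r₁)) (hle₂ : TypeLE M₀ (typeOf G₂ r₂)) :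
    CompatibleTypes (typeOf G₁ r₁) (typeOf G₂ r₂) ∧
    IsRootedPartialKTree k (glue G₁ G₂ r₁ r₂) (glueRoot r₁ r₂) ∧
    (glue G₁ G₂ r₁ r₂).Colorable 2 ∧
    TypeLE M₀ (typeOf (glue G₁ G₂ r₁ r₂) (glueRoot r₁ r₂)) := by
  classical
  obtain ⟨d, hd⟩ := exists_d M₀ hM₀
  have hfin : ∀ (i j : Fin (k + 1)) (M : Fin (k + 1) → Fin (k + 1) → ℕ∞),
      M₀ i j ≤ M i j → ∀ a : ℕ, M i j = a → ∃ a₀ : ℕ, M₀ i j = a₀ := by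
    intro i j M hle a ha
    have h0 : M₀ i j ≠ ⊤ := by
      intro hc
      rw [hc, ha, top_le_iff] at hle
      exact (ENat.coe_ne_top a) hle
    lift M₀ i j to ℕ using h0 with a₀
    exact ⟨a₀, rfl⟩
  have hcompat : CompatibleTypes (typeOf G₁ r₁) (typeOf G₂ r₂) := by
    intro i j a b ha hb
    obtain ⟨a₀, ha₀⟩ := hfin i j _ (hle₁.2 i j) a ha
    exact ((hle₁.1 i j a₀ a ha₀ ha).symm.trans (hle₂.1 i j a₀ b ha₀ hb))
  have hd₁ : ∀ (i j : Fin (k + 1)) (a : ℕ),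
      G₁.edist (r₁ i) (r₁ j) = a → d i + d j = (a : ZMod 2) := by
    intro i j a ha
    have ha' : typeOf G₁ r₁ i j = a := ha
    obtain ⟨a₀, ha₀⟩ := hfin i j _ (hle₁.2 i j) a ha'
    have hpar := hle₁.1 i j a₀ a ha₀ ha'
    rw [hd i j a₀ ha₀]
    exact even_iff_cast_eq.mpr hpar
  have hd₂ : ∀ (i j : Fin (k + 1)) (a : ℕ),
      G₂.edist (r₂ i) (r₂ j) = a → d i + d j = (a : ZMod 2) := by
    intro i j a ha
    have ha' : typeOf G₂ r₂ i j = a := ha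
    obtain ⟨a₀, ha₀⟩ := hfin i j _ (hle₂.2 i j) a ha'
    have hpar := hle₂.1 i j a₀ a ha₀ ha'
    rw [hd i j a₀ ha₀]
    exact even_iff_cast_eq.mpr hpar
  obtain ⟨c₁, hc₁p, hc₁r⟩ := exists_coloring_matching G₁ hb₁ r₁ d hd₁
  obtain ⟨c₂, hc₂p, hc₂r⟩ := exists_coloring_matching G₂ hb₂ r₂ d hd₂
  obtain ⟨cg, hcgp, hcgr⟩ := glue_proper G₁ G₂ r₁ r₂ c₁ c₂ hc₁p hc₂p
    (fun i => by rw [hc₁r, hc₂r])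
  have hcol : (glue G₁ G₂ r₁ r₂).Colorable 2 := by
    refine ⟨SimpleGraph.Coloring.mk (fun v => (⟨(cg v).val, ZMod.val_lt _⟩ : Fin 2)) ?_⟩
    intro u v huv hc
    apply hcgp u v huv
    have hval := congrArg Fin.val hc
    exact ZMod.val_injective 2 hval
  have hge : ∀ i j, M₀ i j ≤
      (glue G₁ G₂ r₁ r₂).edist (glueRoot r₁ r₂ i) (glueRoot r₁ r₂ j) :=
    glue_edist_ge G₁ G₂ r₁ r₂ M₀ hM₀.1 (fun i j => hle₁.2 i j) (fun i j => hle₂.2 i j)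
  refine ⟨hcompat, glue_rooted G₁ G₂ r₁ r₂ h₁ h₂, hcol, ?_, fun i j => hge i j⟩
  intro i j a b ha hb
  have h1 := hd i j a ha
  have hb' : (glue G₁ G₂ r₁ r₂).edist (glueRoot r₁ r₂ i) (glueRoot r₁ r₂ j) = b := hb
  obtain ⟨p, hp⟩ := SimpleGraph.exists_walk_of_edist_eq_coe hb'
  have h2 := walk_parity_s7 hcgp p
  rw [hp] at h2
  rw [hcgr, hcgr, hc₁r, hc₁r] at h2
  exact even_iff_cast_eq.mp (h1.symm.trans h2)
end

section
/- Every finite graph in which every vertex has even degree and which has an odd number of edges contains a cycle of odd length. -/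
open SimpleGraph

lemma oddWalkCycle {V : Type*} {G : SimpleGraph V} :
    ∀ n : ℕ, ∀ (u : V) (w : G.Walk u u), w.length = n → Odd n →
      ∃ (x : V) (c : G.Walk x x), c.IsCycle ∧ Odd c.length := by
  classical
  intro n
  induction n using Nat.strong_induction_on with
  | _ n IH =>
  intro u w hlen hodd
  have hpos : 0 < n := hodd.pos
  have hwnil : ¬ w.Nil := by
    rw [SimpleGraph.Walk.not_nil_iff_lt_length, hlen]; exact hpos
  by_cases hnd : w.support.tail.Nodup
  · -- w is essentially a cycle
    obtain ⟨v, hadj, p, rfl⟩ := SimpleGraph.Walk.not_nil_iff.mp hwnil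
    have hps : (Walk.cons hadj p).support.tail = p.support := by
      simp [Walk.support_cons]
    rw [hps] at hnd
    have hpath : p.IsPath := Walk.IsPath.mk' hnd
    have hne : s(u, v) ∉ p.edges := by
      intro he
      cases p with
      | nil => simp at he
      | cons hadj' p' =>
        rename_i y
        rw [Walk.edges_cons, List.mem_cons] at he
        have hnd' : ¬ v ∈ p'.support ∧ p'.support.Nodup := by
          simpa [Walk.support_cons] using hnd
        rcases he with he | he
        · have huy : u = y := by
            rw [Sym2.eq_iff] at he
            rcases he with ⟨h1, h2⟩ | ⟨h1, h2⟩
            · exact absurd h1 hadj.ne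
            · exact h1
          subst huy
          have : p' = Walk.nil := Walk.isPath_iff_eq_nil.mp (Walk.IsPath.mk' hnd'.2)
          subst this
          rw [Walk.length_cons, Walk.length_cons, Walk.length_nil] at hlen
          obtain ⟨m, hm⟩ := hodd
          omega
        · exact hnd'.1 (Walk.snd_mem_support_of_mem_edges p' he)
    exact ⟨u, Walk.cons hadj p,
      (Walk.cons_isCycle_iff p hadj).mpr ⟨hpath, hne⟩, hlen ▸ hodd⟩
  · -- a repeated internal vertex: split
    obtain ⟨x, hxdup⟩ := List.exists_duplicate_iff_not_nodup.mpr hnd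
    have hcount : 2 ≤ w.support.tail.count x := List.duplicate_iff_two_le_count.mp hxdup
    have hxsup : x ∈ w.support := by
      have : x ∈ w.support.tail := hxdup.mem
      exact List.mem_of_mem_tail this
    set w' := w.rotate x hxsup with hw'
    have hlen' : w'.length = n := by
      rw [hw', Walk.rotate, Walk.length_append]
      have := congrArg Walk.length (w.take_spec hxsup)
      rw [Walk.length_append] at this
      omega
    have hcount' : 2 ≤ w'.support.tail.count x := by
      have h5 := (Walk.support_rotate w x hxsup).perm.count_eq x
      rw [← hw'] at h5
      omega
    have hw'nil : ¬ w'.Nil := by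
      rw [Walk.not_nil_iff_lt_length, hlen']; exact hpos
    obtain ⟨y, hadj, p, hcons⟩ := Walk.not_nil_iff.mp hw'nil
    have hcp : 2 ≤ p.support.count x := by
      rw [hcons] at hcount'
      simpa [Walk.support_cons] using hcount'
    have hxp : x ∈ p.support := by
      rw [← List.count_pos_iff]; omega
    set q := p.takeUntil x hxp with hq
    set r := p.dropUntil x hxp with hr
    have hspec : q.append r = p := p.take_spec hxp
    have hlensum : q.length + r.length = p.length := by
      rw [← Walk.length_append, hspec]
    have hplen : p.length + 1 = n := by
      have := hlen'
      rw [hcons, Walk.length_cons] at this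
      omega
    have hrpos : 1 ≤ r.length := by
      have hsplit : p.support.count x = q.support.count x + r.support.tail.count x := by
        rw [← hspec, Walk.support_append, List.count_append]
      have h1 : q.support.count x = 1 := p.count_support_takeUntil_eq_one hxp
      have h2 : r.support.tail.count x ≤ r.support.tail.length :=
        List.count_le_length
      have h3 : r.support.tail.length = r.length := by
        have := r.length_support
        have : r.support.tail.length = r.support.length - 1 := by
          cases r.support with
          | nil => simp
          | cons a l => simp
        omega
      omega
    rcases Nat.even_or_odd r.length with hre | hro
    · -- cons hadj q is odd and shorter
      have hodd1 : Odd (Walk.cons hadj q).length := by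
        rw [Walk.length_cons]
        rcases hre with ⟨k, hk⟩
        rcases hodd with ⟨m, hm⟩
        refine Even.add_one ⟨m - k, by omega⟩
      exact IH (Walk.cons hadj q).length
        (by rw [Walk.length_cons]; omega) x (Walk.cons hadj q) rfl hodd1
    · exact IH r.length (by omega) x r rfl hro

open Finset in
/-- Every finite graph in which every vertex has even degree and which has
an odd number of edges contains a cycle of odd length. -/
theorem stmt12 (V : Type) [Fintype V] [DecidableEq V] (G : SimpleGraph V)
    [DecidableRel G.Adj] (hdeg : ∀ v : V, Even (G.degree v))
    (hodd : Odd G.edgeFinset.card) :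
    ∃ (u : V) (w : G.Walk u u), w.IsCycle ∧ Odd w.length := by
  by_contra hno
  -- every closed walk has even length
  have heven : ∀ (u : V) (w : G.Walk u u), Even w.length := by
    intro u w
    by_contra ho
    rw [Nat.not_even_iff_odd] at ho
    exact hno (oddWalkCycle w.length u w rfl ho)
  -- the parity 2-coloring
  have hreach : ∀ v : V, G.Reachable ((G.connectedComponentMk v).out) v := by
    intro v
    apply ConnectedComponent.exact
    exact Quot.out_eq _
  let wk : ∀ v : V, G.Walk ((G.connectedComponentMk v).out) v :=
    fun v => (hreach v).some
  let c : V → Bool := fun v => decide ((wk v).length % 2 = 1)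
  have hcadj : ∀ u v : V, G.Adj u v → c u ≠ c v := by
    intro u v huv
    have hmk : G.connectedComponentMk u = G.connectedComponentMk v :=
      ConnectedComponent.sound huv.reachable
    have hroot : (G.connectedComponentMk v).out = (G.connectedComponentMk u).out := by
      rw [hmk]
    let closed : G.Walk ((G.connectedComponentMk u).out) ((G.connectedComponentMk u).out) :=
      (wk u).append (Walk.cons huv ((wk v).copy hroot rfl).reverse)
    have he := heven _ closed
    have hlen : closed.length = (wk u).length + (1 + (wk v).length) := by
      show ((wk u).append (Walk.cons huv ((wk v).copy hroot rfl).reverse)).length = _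
      rw [Walk.length_append, Walk.length_cons, Walk.length_reverse, Walk.length_copy]
      omega
    rw [hlen] at he
    obtain ⟨k, hk⟩ := he
    intro hcc
    have : ((wk u).length % 2 = 1) ↔ ((wk v).length % 2 = 1) := by
      simpa [c, decide_eq_decide] using hcc
    omega
  -- count edges
  let A : Finset V := univ.filter (fun v => c v = true)
  let D : Finset G.Dart := univ.filter (fun d => c d.fst = true)
  have h1 : D.card = ∑ v ∈ A, G.degree v := by
    rw [Finset.card_eq_sum_card_fiberwise (f := fun d : G.Dart => d.fst) (t := A)
      (fun d hd => by simp only [A, D, mem_coe, mem_filter, mem_univ, true_and] at hd ⊢; exact hd)]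
    refine Finset.sum_congr rfl fun v hv => ?_
    rw [← G.dart_fst_fiber_card_eq_degree v]
    congr 1
    ext d
    simp only [D, mem_filter, mem_univ, true_and, and_iff_right_iff_imp]
    intro h
    simp only [A, mem_filter, mem_univ, true_and] at hv
    rw [h]; exact hv
  have h2 : D.card = G.edgeFinset.card := by
    apply Finset.card_bij (fun d _ => d.edge)
    · intro d _
      rw [mem_edgeFinset]
      exact d.edge_mem
    · intro d₁ h₁ d₂ h₂ he
      rcases (G.dart_edge_eq_iff d₁ d₂).mp he with h | h
      · exact h
      · exfalso
        simp only [D, mem_filter, mem_univ, true_and] at h₁ h₂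
        have : d₁.fst = d₂.snd := by rw [h]; rfl
        apply hcadj d₂.fst d₂.snd d₂.adj
        rw [h₂, ← this, h₁]
    · intro e he
      rw [mem_edgeFinset] at he
      induction e with
      | _ a b =>
        have hab : G.Adj a b := he
        by_cases hca : c a = true
        · exact ⟨⟨(a, b), hab⟩, by simpa [D] using hca, rfl⟩
        · have hcb : c b = true := by
            have := hcadj a b hab
            cases hca' : c a <;> cases hcb' : c b <;> simp_all
          exact ⟨⟨(b, a), hab.symm⟩, by simpa [D] using hcb, Sym2.eq_swap⟩
  have h3 : Even (∑ v ∈ A, G.degree v) := by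
    rcases Finset.dvd_sum (fun v _ => (hdeg v).two_dvd) with ⟨k, hk⟩
    exact ⟨k, by rw [hk]; ring⟩
  rw [← h1] at h3
  rw [← h2] at hodd
  obtain ⟨a, ha⟩ := h3
  obtain ⟨b, hb⟩ := hodd
  omega
end
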